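/- arXiv:2007.00209 — 5 statements merged into one kernel-verified Lean document; each statement's English description precedes it below -/
import Mathlib

section
/- Let μ : Σ → X be a countably additive vector measure on a σ-algebra Σ with values in a Banach space X. Then μ is countably additive if and only if the scalar measure x'μ : A ↦ x'(μ(A)) is countably additive for every x' in the topological dual X'. -/
open Filter Topology Set

namespace OPAux

lemma rowEstimate (δ : ℝ) (g : ℕ → ℝ) (hgsum : Summable g)
    (N1 N2 : ℕ) (G : Finset ℕ) (M : Set ℕ) (hN12 : N1 ≤ N2)
    (hMb : M ∩ Set.Ioc N1 N2 = ↑G)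
    (hhead : ∑ i ∈ Finset.range (N1 + 1), |g i| < δ/8)
    (htail : ∑' i, |g (i + (N2 + 1))| < δ/8)
    (hblock : 3*δ/8 ≤ |∑ i ∈ G, g i|) :
    δ/8 ≤ |∑' i, M.indicator g i| := by
  have hgabs : Summable fun i => |g i| := hgsum.abs
  set A1 : Set ℕ := M ∩ Set.Iic N1 with hA1
  set A2 : Set ℕ := M ∩ Set.Ioc N1 N2 with hA2
  set A3 : Set ℕ := M ∩ Set.Ioi N2 with hA3
  have hpt : ∀ i, M.indicator g i = A1.indicator g i + A2.indicator g i + A3.indicator g i := by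
    have hd12 : Disjoint A1 A2 := by
      rw [Set.disjoint_left]
      rintro i ⟨-, hi1⟩ ⟨-, hi2⟩
      simp only [Set.mem_Iic] at hi1
      simp only [Set.mem_Ioc] at hi2
      omega
    have hd123 : Disjoint (A1 ∪ A2) A3 := by
      rw [Set.disjoint_left]
      rintro i (⟨-, hi1⟩ | ⟨-, hi1⟩) ⟨-, hi2⟩ <;>
        simp only [Set.mem_Iic, Set.mem_Ioc, Set.mem_Ioi] at hi1 hi2 <;> omega
    have hU : A1 ∪ A2 ∪ A3 = M := by
      ext i
      by_cases him : i ∈ M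
      · simp only [Set.mem_union, hA1, hA2, hA3, Set.mem_inter_iff, him, true_and,
          Set.mem_Iic, Set.mem_Ioc, Set.mem_Ioi, iff_true]
        omega
      · simp [hA1, hA2, hA3, him]
    intro i
    rw [← hU, Set.indicator_union_of_disjoint hd123, Set.indicator_union_of_disjoint hd12]
  have hts : ∑' i, M.indicator g i
      = (∑' i, A1.indicator g i) + (∑' i, A2.indicator g i) + ∑' i, A3.indicator g i := by
    rw [← Summable.tsum_add ((hgsum.indicator A1)) (hgsum.indicator A2),
      ← Summable.tsum_add (((hgsum.indicator A1)).add ((hgsum.indicator A2))) (hgsum.indicator A3)]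
    exact tsum_congr hpt
  have h1 : |∑' i, A1.indicator g i| ≤ ∑ i ∈ Finset.range (N1 + 1), |g i| := by
    have he : ∑' i, A1.indicator g i = ∑ i ∈ Finset.range (N1 + 1), A1.indicator g i := by
      apply tsum_eq_sum
      intro i hi
      have hlt : ¬ i ≤ N1 := fun h => hi (Finset.mem_range.mpr (by omega))
      simp [hA1, Set.indicator_apply, Set.mem_Iic, hlt]
    rw [he]
    refine le_trans (Finset.abs_sum_le_sum_abs _ _) (Finset.sum_le_sum fun i _ => ?_)
    by_cases h : i ∈ A1 <;> simp [Set.indicator_apply, h, abs_nonneg]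
  have h2 : ∑' i, A2.indicator g i = ∑ i ∈ G, g i := by
    have hA2G : A2 = (↑G : Set ℕ) := by rw [hA2]; exact hMb
    rw [hA2G]
    rw [tsum_eq_sum (s := G) (fun i hi => by simp [Set.indicator_apply, hi])]
    exact Finset.sum_congr rfl (fun i hi => by simp [Set.indicator_apply, hi])
  have h3 : |∑' i, A3.indicator g i| ≤ ∑' i, |g (i + (N2 + 1))| := by
    have hsumm3 : Summable (A3.indicator g) := hgsum.indicator A3
    have hzero : ∀ i ∈ Finset.range (N2 + 1), A3.indicator g i = 0 := by
      intro i hi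
      have hni : ¬ N2 < i := by have := Finset.mem_range.mp hi; omega
      simp [hA3, Set.indicator_apply, Set.mem_Ioi, hni]
    have hsplit3 := Summable.sum_add_tsum_nat_add (f := A3.indicator g) (N2 + 1) hsumm3
    rw [Finset.sum_eq_zero hzero, zero_add] at hsplit3
    rw [← hsplit3]
    have hs1 : Summable fun i => |A3.indicator g (i + (N2 + 1))| :=
      ((summable_nat_add_iff (f := A3.indicator g) (N2+1)).mpr hsumm3).abs
    have hs2 : Summable fun i => |g (i + (N2 + 1))| := (summable_nat_add_iff (f := fun i => |g i|) (N2+1)).mpr hgabs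
    have habs : |∑' i, A3.indicator g (i + (N2 + 1))|
        ≤ ∑' i, |A3.indicator g (i + (N2 + 1))| := by
      simpa [Real.norm_eq_abs] using
        norm_tsum_le_tsum_norm (f := fun i => A3.indicator g (i + (N2 + 1)))
          (by simpa [Real.norm_eq_abs] using hs1)
    refine le_trans habs (Summable.tsum_le_tsum (fun i => ?_) hs1 hs2)
    by_cases h : (i + (N2 + 1)) ∈ A3 <;> simp [Set.indicator_apply, h, abs_nonneg]
  have hb : 3*δ/8 ≤ |∑' i, A2.indicator g i| := by rw [h2]; exact hblock
  rw [hts]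
  set u := ∑' i, A1.indicator g i
  set v := ∑' i, A2.indicator g i
  set w := ∑' i, A3.indicator g i
  have e1 : |v| ≤ |u + v| + |u| := by
    have := abs_add_le (u + v) (-u); simpa using this
  have e2 : |u + v| ≤ |u + v + w| + |w| := by
    have := abs_add_le (u + v + w) (-w); simpa using this
  have := h1.trans_lt hhead
  have := h3.trans_lt htail
  linarith


lemma keyStep (δ : ℝ) (hδ : 0 < δ) (d : ℕ → ℕ → ℝ)
    (hd_big : ∀ k, δ < ∑' i, |d k i|)
    (hd_sum : ∀ k, Summable fun i => |d k i|)
    (hpt : ∀ i, Filter.Tendsto (fun k => d k i) atTop (𝓝 0)) :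
    ∀ s : ℕ × ℕ × Finset ℕ, ∃ s' : ℕ × ℕ × Finset ℕ,
      s.1 < s'.1 ∧ s.2.1 < s'.2.1 ∧ (↑s'.2.2 : Set ℕ) ⊆ Set.Ioc s.2.1 s'.2.1 ∧
      (∑ i ∈ Finset.range (s.2.1 + 1), |d s'.1 i|) < δ/8 ∧
      (∑' i, |d s'.1 (i + (s'.2.1 + 1))|) < δ/8 ∧
      3*δ/8 ≤ |∑ i ∈ s'.2.2, d s'.1 i| := by
  rintro ⟨k, N, -⟩
  -- choose k' > k with small head
  have hhead : Tendsto (fun j => ∑ i ∈ Finset.range (N+1), |d j i|) atTop (𝓝 0) := by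
    have : Tendsto (fun j => ∑ i ∈ Finset.range (N+1), |d j i|) atTop
        (𝓝 (∑ i ∈ Finset.range (N+1), (0:ℝ))) := by
      apply tendsto_finset_sum
      intro i _
      simpa using (hpt i).abs
    simpa using this
  obtain ⟨N₀, hN₀⟩ := eventually_atTop.mp (hhead.eventually_lt_const (by linarith : (0:ℝ) < δ/8))
  set k' := max (k+1) N₀ with hk'
  have hkk' : k < k' := lt_of_lt_of_le (Nat.lt_succ_self k) (le_max_left _ _)
  have hhead' : ∑ i ∈ Finset.range (N+1), |d k' i| < δ/8 := hN₀ k' (le_max_right _ _)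
  -- choose N' > N with small tail for row k'
  have htail : Tendsto (fun m => ∑' i, |d k' (i + m)|) atTop (𝓝 0) :=
    tendsto_sum_nat_add (fun i => |d k' i|)
  obtain ⟨m₀, hm₀⟩ := eventually_atTop.mp (htail.eventually_lt_const (by linarith : (0:ℝ) < δ/8))
  set N' := max (N+1) m₀ with hN'
  have hNN' : N < N' := lt_of_lt_of_le (Nat.lt_succ_self N) (le_max_left _ _)
  have htail' : ∑' i, |d k' (i + (N' + 1))| < δ/8 :=
    hm₀ _ (le_trans (le_max_right _ _) (Nat.le_succ N'))
  -- the block carries mass ≥ 3δ/4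
  set B := Finset.Ioc N N' with hB
  have hsplit : ∑' i, |d k' i|
      = ∑ i ∈ Finset.range (N+1), |d k' i| + ∑ i ∈ B, |d k' i|
        + ∑' i, |d k' (i + (N' + 1))| := by
    have h1 : ∑' i, |d k' i| = ∑ i ∈ Finset.range (N'+1), |d k' i|
        + ∑' i, |d k' (i + (N' + 1))| := (Summable.sum_add_tsum_nat_add (N'+1) (hd_sum k')).symm
    have h2 : ∑ i ∈ Finset.range (N'+1), |d k' i|
        = ∑ i ∈ Finset.range (N+1), |d k' i| + ∑ i ∈ B, |d k' i| := by
      rw [Finset.range_eq_Ico,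
        ← Finset.sum_Ico_consecutive _ (by omega : 0 ≤ N+1) (by omega : N+1 ≤ N'+1)]
      congr 1
      apply Finset.sum_congr _ (fun _ _ => rfl)
      ext i; simp [hB]
      apply Finset.sum_congr _ (fun _ _ => rfl)
      ext i; simp only [hB, Finset.mem_Ico, Finset.mem_Ioc]; omega
    rw [h1, h2]
  have hblockmass : 3*δ/4 ≤ ∑ i ∈ B, |d k' i| := by
    have := hd_big k'
    rw [hsplit] at this
    linarith
  -- choose signs
  set Bp := B.filter (fun i => 0 ≤ d k' i) with hBp
  set Bm := B.filter (fun i => ¬ 0 ≤ d k' i) with hBm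
  have hsum_split : ∑ i ∈ B, |d k' i| = (∑ i ∈ Bp, d k' i) + (∑ i ∈ Bm, -(d k' i)) := by
    rw [hBp, hBm, ← Finset.sum_filter_add_sum_filter_not B (fun i => 0 ≤ d k' i) (fun i => |d k' i|)]
    congr 1
    · exact Finset.sum_congr rfl (fun i hi => abs_of_nonneg (Finset.mem_filter.mp hi).2)
    · exact Finset.sum_congr rfl (fun i hi =>
        abs_of_neg (lt_of_not_ge (Finset.mem_filter.mp hi).2))
  have : 3*δ/8 ≤ ∑ i ∈ Bp, d k' i ∨ 3*δ/8 ≤ ∑ i ∈ Bm, -(d k' i) := by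
    by_contra hc; push_neg at hc; rw [hsum_split] at hblockmass; linarith [hc.1, hc.2]
  have hGsub : ∀ G : Finset ℕ, G ⊆ B → (↑G : Set ℕ) ⊆ Set.Ioc N N' := by
    intro G hG i hi
    have := hG hi
    simpa [hB] using Finset.mem_Ioc.mp (by simpa [hB] using this)
  rcases this with h | h
  · exact ⟨(k', N', Bp), hkk', hNN', hGsub _ (Finset.filter_subset _ _), hhead', htail',
      le_trans h (le_abs_self _)⟩
  · refine ⟨(k', N', Bm), hkk', hNN', hGsub _ (Finset.filter_subset _ _), hhead', htail', ?_⟩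
    have h' : 3*δ/8 ≤ -∑ i ∈ Bm, d k' i := by
      rw [← Finset.sum_neg_distrib]; exact h
    exact le_trans h' (neg_le_abs _)


lemma glidingHump (a : ℕ → ℕ → ℝ)
    (hsum : ∀ j, Summable fun i => |a j i|)
    (hCau : ∀ M : Set ℕ, CauchySeq fun j => ∑' i, M.indicator (a j) i) :
    ∀ δ > (0:ℝ), ∃ N : ℕ, ∀ p ≥ N, ∀ q ≥ N, ∑' i, |a p i - a q i| ≤ δ := by
  by_contra hcon
  push_neg at hcon
  obtain ⟨δ, hδ, H⟩ := hcon
  have hrow : ∀ j, Summable (a j) := fun j => (hsum j).of_abs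
  -- choose rows of differences with indices ≥ k
  have Hk : ∀ k : ℕ, ∃ p ≥ k, ∃ q ≥ k, δ < ∑' i, |a p i - a q i| := fun k => H k
  set P : ℕ → ℕ := fun k => (Hk k).choose with hP
  have hPk : ∀ k, k ≤ P k := fun k => (Hk k).choose_spec.1
  set Q : ℕ → ℕ := fun k => (Hk k).choose_spec.2.choose with hQ
  have hQk : ∀ k, k ≤ Q k := fun k => (Hk k).choose_spec.2.choose_spec.1
  set d : ℕ → ℕ → ℝ := fun k i => a (P k) i - a (Q k) i with hd
  have hd_big : ∀ k, δ < ∑' i, |d k i| := fun k => (Hk k).choose_spec.2.choose_spec.2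
  have hd_row : ∀ k, Summable (d k) := fun k => (hrow (P k)).sub (hrow (Q k))
  have hd_sum : ∀ k, Summable fun i => |d k i| := fun k => (hd_row k).abs
  -- sums over any M of the difference rows tend to 0
  have hMd : ∀ M : Set ℕ, Tendsto (fun k => ∑' i, M.indicator (d k) i) atTop (𝓝 0) := by
    intro M
    have heq : ∀ k, ∑' i, M.indicator (d k) i
        = (∑' i, M.indicator (a (P k)) i) - ∑' i, M.indicator (a (Q k)) i := by
      intro k
      rw [← Summable.tsum_sub ((hrow (P k)).indicator M) ((hrow (Q k)).indicator M)]
      congr 1; funext i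
      by_cases hi : i ∈ M <;> simp [Set.indicator_apply, hi, hd]
    rw [Metric.tendsto_atTop]
    intro η hη
    obtain ⟨N, hN⟩ := Metric.cauchySeq_iff.mp (hCau M) η hη
    refine ⟨N, fun k hk => ?_⟩
    rw [heq]
    have := hN (P k) (le_trans hk (hPk k)) (Q k) (le_trans hk (hQk k))
    rw [Real.dist_eq] at this ⊢
    simpa using this
  have hpt : ∀ i, Tendsto (fun k => d k i) atTop (𝓝 0) := by
    intro i
    have := hMd {i}
    have heq : ∀ k, ∑' j, ({i} : Set ℕ).indicator (d k) j = d k i := by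
      intro k
      rw [tsum_eq_single i]
      · simp [Set.indicator_apply]
      · intro b hb; simp [Set.indicator_apply, hb]
    simpa [heq] using this
  classical
  have key := keyStep δ hδ d hd_big hd_sum hpt
  set step : ℕ × ℕ × Finset ℕ → ℕ × ℕ × Finset ℕ := fun s => (key s).choose with hstepdef
  have hstep : ∀ s : ℕ × ℕ × Finset ℕ,
      s.1 < (step s).1 ∧ s.2.1 < (step s).2.1 ∧
      (↑(step s).2.2 : Set ℕ) ⊆ Set.Ioc s.2.1 (step s).2.1 ∧
      (∑ i ∈ Finset.range (s.2.1 + 1), |d (step s).1 i|) < δ/8 ∧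
      (∑' i, |d (step s).1 (i + ((step s).2.1 + 1))|) < δ/8 ∧
      3*δ/8 ≤ |∑ i ∈ (step s).2.2, d (step s).1 i| := fun s => (key s).choose_spec
  set S : ℕ → ℕ × ℕ × Finset ℕ := fun r => step^[r] (0, 0, ∅) with hS
  have hSsucc : ∀ r, S (r+1) = step (S r) := by
    intro r; rw [hS]; simp [Function.iterate_succ_apply']
  set K : ℕ → ℕ := fun r => (S r).1 with hK
  set Nn : ℕ → ℕ := fun r => (S r).2.1 with hNn
  set G : ℕ → Finset ℕ := fun r => (S r).2.2 with hG
  have hprop : ∀ r, K r < K (r+1) ∧ Nn r < Nn (r+1) ∧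
      (↑(G (r+1)) : Set ℕ) ⊆ Set.Ioc (Nn r) (Nn (r+1)) ∧
      (∑ i ∈ Finset.range (Nn r + 1), |d (K (r+1)) i|) < δ/8 ∧
      (∑' i, |d (K (r+1)) (i + (Nn (r+1) + 1))|) < δ/8 ∧
      3*δ/8 ≤ |∑ i ∈ G (r+1), d (K (r+1)) i| := by
    intro r
    have := hstep (S r)
    rw [← hSsucc r] at this
    exact this
  clear_value step S
  clear hstep hSsucc hstepdef key
  have hKmono : StrictMono K := strictMono_nat_of_lt_succ (fun r => (hprop r).1)
  have hNmono : StrictMono Nn := strictMono_nat_of_lt_succ (fun r => (hprop r).2.1)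
  set M : Set ℕ := ⋃ r, (↑(G (r+1)) : Set ℕ) with hM
  have hMblock : ∀ r, M ∩ Set.Ioc (Nn r) (Nn (r+1)) = ↑(G (r+1)) := by
    intro r
    apply Set.Subset.antisymm
    · rintro i ⟨hiM, hio⟩
      obtain ⟨s, his⟩ := Set.mem_iUnion.mp hiM
      have hs := (hprop s).2.2.1 his
      rcases lt_trichotomy s r with h | h | h
      · exfalso
        have : Nn (s+1) ≤ Nn r := hNmono.monotone (by omega)
        exact absurd hio.1 (by have := hs.2; omega)
      · rwa [h] at his
      · exfalso
        have : Nn (r+1) ≤ Nn s := hNmono.monotone (by omega)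
        exact absurd hio.2 (by have := hs.1; omega)
    · intro i hi
      exact ⟨Set.mem_iUnion.mpr ⟨r, hi⟩, (hprop r).2.2.1 hi⟩
  have hbig : ∀ r, δ/8 ≤ |∑' i, M.indicator (d (K (r+1))) i| := by
    intro r
    exact rowEstimate δ (d (K (r+1))) (hd_row _) (Nn r) (Nn (r+1)) (G (r+1)) M
      (hNmono (Nat.lt_succ_self r)).le (hMblock r) (hprop r).2.2.2.1
      (hprop r).2.2.2.2.1 (hprop r).2.2.2.2.2
  have hKt : Tendsto (fun r => K (r+1)) atTop atTop :=
    (hKmono.comp (strictMono_id.add_const 1)).tendsto_atTop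
  have habs0 : Tendsto (fun r => |∑' i, M.indicator (d (K (r+1))) i|) atTop (𝓝 0) := by
    have := (hMd M).comp hKt
    simpa using this.abs
  obtain ⟨r, hr⟩ := (habs0.eventually_lt_const (by linarith : (0:ℝ) < δ/8)).exists
  exact absurd (hbig r) (not_le.mpr hr)


section
variable {T X : Type*} [MeasurableSpace T]
    [NormedAddCommGroup X] [NormedSpace ℝ X]

lemma finAdd (μ : Set T → X) (hempty : μ ∅ = 0)
    (hadd : ∀ A B : Set T, MeasurableSet A → MeasurableSet B → Disjoint A B →
      μ (A ∪ B) = μ A + μ B)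
    (g : ℕ → Set T) (hg : ∀ n, MeasurableSet (g n))
    (hdisj : Pairwise (Function.onFun Disjoint g)) :
    ∀ t : Finset ℕ, μ (⋃ n ∈ t, g n) = ∑ n ∈ t, μ (g n) := by
  classical
  intro t
  induction t using Finset.induction_on with
  | empty => simpa using hempty
  | @insert a s ha ih =>
    have h1 : (⋃ n ∈ insert a s, g n) = g a ∪ ⋃ n ∈ s, g n := by
      simp [Set.biUnion_insert]
    have hmeas : MeasurableSet (⋃ n ∈ s, g n) :=
      MeasurableSet.biUnion s.countable_toSet (fun n _ => hg n)
    have hdis : Disjoint (g a) (⋃ n ∈ s, g n) := by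
      apply Set.disjoint_iUnion₂_right.mpr
      intro n hn
      exact hdisj (fun h => ha (h ▸ hn))
    rw [h1, hadd _ _ (hg a) hmeas hdis, ih, Finset.sum_insert ha]

lemma scalarHasSum (μ : Set T → X) (hempty : μ ∅ = 0)
    (h : ∀ x' : X →L[ℝ] ℝ, ∀ f : ℕ → Set T, (∀ n, MeasurableSet (f n)) →
      Pairwise (Function.onFun Disjoint f) →
      HasSum (fun n => x' (μ (f n))) (x' (μ (⋃ n, f n))))
    (B : ℕ → Set T) (hB : ∀ n, MeasurableSet (B n))
    (hdisj : Pairwise (Function.onFun Disjoint B))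
    (M : Set ℕ) (x' : X →L[ℝ] ℝ) :
    HasSum (M.indicator fun i => x' (μ (B i))) (x' (μ (⋃ i ∈ M, B i))) := by
  classical
  set g : ℕ → Set T := fun i => if i ∈ M then B i else ∅ with hg
  have hgm : ∀ n, MeasurableSet (g n) := by
    intro n; rw [hg]; dsimp only
    split_ifs
    · exact hB n
    · exact MeasurableSet.empty
  have hgd : Pairwise (Function.onFun Disjoint g) := by
    intro i j hij
    unfold Function.onFun
    rw [hg]; dsimp only
    split_ifs
    · exact hdisj hij
    · exact Set.disjoint_empty _
    · exact Set.empty_disjoint _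
    · exact Set.empty_disjoint _
  have hU : (⋃ n, g n) = ⋃ i ∈ M, B i := by
    ext x
    simp only [Set.mem_iUnion, hg]
    constructor
    · rintro ⟨n, hn⟩
      by_cases hnM : n ∈ M
      · exact ⟨n, hnM, by simpa [hnM] using hn⟩
      · simp [hnM] at hn
    · rintro ⟨n, hnM, hn⟩
      exact ⟨n, by simpa [hnM] using hn⟩
  have := h x' g hgm hgd
  rw [hU] at this
  convert this using 1
  funext i
  by_cases hiM : i ∈ M <;> simp [Set.indicator_apply, hiM, hg, hempty]

end

end OPAux

open MeasureTheory

/-- Orlicz–Pettis for measures: a finitely additive set function into a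
Banach space is countably additive iff each scalarization `x' ∘ μ` is countably additive. -/
theorem stmt_3 {T X : Type*} [MeasurableSpace T]
    [NormedAddCommGroup X] [NormedSpace ℝ X] [CompleteSpace X]
    (μ : Set T → X) (hempty : μ ∅ = 0)
    (hadd : ∀ A B : Set T, MeasurableSet A → MeasurableSet B → Disjoint A B →
      μ (A ∪ B) = μ A + μ B) :
    (∀ f : ℕ → Set T, (∀ n, MeasurableSet (f n)) → Pairwise (Function.onFun Disjoint f) →
        HasSum (fun n => μ (f n)) (μ (⋃ n, f n)))
      ↔ (∀ x' : X →L[ℝ] ℝ, ∀ f : ℕ → Set T, (∀ n, MeasurableSet (f n)) →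
          Pairwise (Function.onFun Disjoint f) →
          HasSum (fun n => x' (μ (f n))) (x' (μ (⋃ n, f n)))) := by
  constructor
  · intro hca x' f hf hfd
    exact x'.hasSum (hca f hf hfd)
  · intro h f hf hfd
    have finAdd := OPAux.finAdd μ hempty hadd
    have scalarHasSum := OPAux.scalarHasSum μ hempty h
    have glidingHump := OPAux.glidingHump
    classical
    -- it suffices to prove summability
    suffices hS : Summable fun n => μ (f n) by
      obtain ⟨s, hs⟩ := hS
      have hse : μ (⋃ n, f n) = s := by
        rw [NormedSpace.eq_iff_forall_dual_eq ℝ]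
        intro g
        exact HasSum.unique (h g f hf hfd) (g.hasSum hs)
      rw [hse]; exact hs
    by_contra hnot
    rw [summable_iff_vanishing_norm] at hnot
    push_neg at hnot
    obtain ⟨ε, hε, H⟩ := hnot
    -- construct pairwise disjoint finsets with block sums of norm ≥ ε
    set step : Finset ℕ → Finset ℕ := fun U => U ∪ (H U).choose with hstepdef
    have hstep : ∀ U : Finset ℕ, Disjoint (H U).choose U ∧
        ε ≤ ‖∑ n ∈ (H U).choose, μ (f n)‖ := fun U => (H U).choose_spec
    set U : ℕ → Finset ℕ := fun r => step^[r] ∅ with hU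
    set t : ℕ → Finset ℕ := fun r => (H (U r)).choose with ht
    have hUsucc : ∀ r, U (r+1) = U r ∪ t r := by
      intro r; rw [hU]; simp only [Function.iterate_succ_apply']; rfl
    have htdisj : ∀ r, Disjoint (t r) (U r) := fun r => (hstep (U r)).1
    have htnorm : ∀ r, ε ≤ ‖∑ n ∈ t r, μ (f n)‖ := fun r => (hstep (U r)).2
    have hUmono : Monotone U := by
      apply monotone_nat_of_le_succ
      intro r; rw [hUsucc r]; exact Finset.subset_union_left
    have htU : ∀ r, t r ⊆ U (r+1) := by
      intro r; rw [hUsucc r]; exact Finset.subset_union_right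
    have htt : ∀ {k l : ℕ}, k < l → Disjoint (t k) (t l) := by
      intro k l hkl
      exact (Finset.disjoint_of_subset_right
        ((htU k).trans (hUmono (by omega : k + 1 ≤ l))) (htdisj l)).symm
    clear_value step U t
    -- the blocks
    set B : ℕ → Set T := fun r => ⋃ n ∈ t r, f n with hB
    have hBm : ∀ r, MeasurableSet (B r) :=
      fun r => MeasurableSet.biUnion (t r).countable_toSet (fun n _ => hf n)
    have hBd : Pairwise (Function.onFun Disjoint B) := by
      intro k l hkl
      have htkl : Disjoint (t k) (t l) := by
        rcases lt_or_gt_of_ne hkl with h' | h'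
        · exact htt h'
        · exact (htt h').symm
      unfold Function.onFun
      rw [Set.disjoint_left]
      rintro x hx1 hx2
      simp only [hB, Set.mem_iUnion] at hx1 hx2
      obtain ⟨n, hn, hxn⟩ := hx1
      obtain ⟨m, hm, hxm⟩ := hx2
      rcases eq_or_ne n m with rfl | hnm
      · exact Finset.disjoint_left.mp htkl hn hm
      · exact Set.disjoint_left.mp (hfd hnm) hxn hxm
    set ν : ℕ → X := fun r => μ (B r) with hν
    have hνnorm : ∀ r, ε ≤ ‖ν r‖ := by
      intro r
      rw [hν]; dsimp only
      rw [hB]; dsimp only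
      rw [finAdd f hf hfd (t r)]
      exact htnorm r
    have hνne : ∀ r, ν r ≠ 0 := fun r hr => by
      have := hνnorm r; rw [hr] at this; simp at this; linarith
    -- dual functionals
    have hdual : ∀ r, ∃ g : X →L[ℝ] ℝ, ‖g‖ = 1 ∧ g (ν r) = ‖ν r‖ :=
      fun r => exists_dual_vector ℝ (ν r) (norm_ne_zero_iff.mpr (hνne r))
    set x' : ℕ → X →L[ℝ] ℝ := fun r => (hdual r).choose with hx'
    have hx'norm : ∀ r, ‖x' r‖ = 1 := fun r => (hdual r).choose_spec.1
    have hx'val : ∀ r, x' r (ν r) = ‖ν r‖ := fun r => (hdual r).choose_spec.2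
    -- the subspace
    set Y : Set X := closure (Submodule.span ℝ (Set.range ν) : Set X) with hY
    have hYmem : ∀ M : Set ℕ, μ (⋃ i ∈ M, B i) ∈ Y := by
      intro M
      by_contra hnotY
      obtain ⟨F, u, hFu, huF⟩ := geometric_hahn_banach_closed_point
        (((Submodule.span ℝ (Set.range ν)).convex).closure) isClosed_closure hnotY
      have hF0 : ∀ y ∈ Submodule.span ℝ (Set.range ν), F y = 0 := by
        intro y hy
        by_contra hFy
        have hc : ∀ c : ℝ, c * F y < u := by
          intro c
          have hcy : (c • y) ∈ Y :=
            subset_closure (Submodule.smul_mem _ c hy)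
          have := hFu _ hcy
          simpa using this
        have := hc ((u + 1)/F y)
        rw [div_mul_cancel₀ _ hFy] at this
        linarith
      have hFν : ∀ i, F (ν i) = 0 :=
        fun i => hF0 _ (Submodule.subset_span (Set.mem_range_self i))
      have hzero : (M.indicator fun i => F (ν i)) = fun _ => (0:ℝ) := by
        funext i
        by_cases hi : i ∈ M <;> simp [Set.indicator_apply, hi, hFν]
      have hFM : F (μ (⋃ i ∈ M, B i)) = 0 := by
        have := scalarHasSum B hBm hBd M F
        rw [hzero] at this
        exact (hasSum_zero.unique this).symm
      have h0Y : (0:X) ∈ Y := subset_closure (Submodule.zero_mem _)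
      have := hFu 0 h0Y
      rw [map_zero] at this
      rw [hFM] at huF
      linarith
    -- separability and enumeration
    have hsep : TopologicalSpace.IsSeparable Y :=
      ((Set.countable_range ν).isSeparable.span).closure
    obtain ⟨c, hc_count, hcY⟩ := hsep
    have hcne : (insert (0:X) c).Nonempty := ⟨0, Set.mem_insert _ _⟩
    obtain ⟨e, he⟩ := (hc_count.insert 0).exists_eq_range hcne
    have hYe : Y ⊆ closure (Set.range e) := by
      rw [← he]
      exact hcY.trans (closure_mono (Set.subset_insert _ _))
    -- sequential extraction
    set Fseq : ℕ → (ℕ → ℝ) := fun k i => x' k (e i) with hFseq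
    have hmem : ∀ k, Fseq k ∈ Set.univ.pi (fun i => Set.Icc (-‖e i‖) ‖e i‖) := by
      intro k i _
      have := (x' k).le_opNorm (e i)
      rw [hx'norm k, one_mul] at this
      have habs : |x' k (e i)| ≤ ‖e i‖ := by simpa [Real.norm_eq_abs] using this
      rw [Set.mem_Icc]
      exact abs_le.mp habs
    have hCcomp : IsCompact (Set.univ.pi (fun i : ℕ => Set.Icc (-‖e i‖) ‖e i‖)) :=
      isCompact_univ_pi fun i => isCompact_Icc
    obtain ⟨L, -, φ, hφmono, hφtend⟩ := hCcomp.isSeqCompact hmem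
    rw [tendsto_pi_nhds] at hφtend
    -- Cauchy on Y
    have hCauY : ∀ z ∈ Y, CauchySeq fun k => x' (φ k) z := by
      intro z hz
      rw [Metric.cauchySeq_iff]
      intro η hη
      obtain ⟨w, hw, hwz⟩ := Metric.mem_closure_iff.mp (hYe hz) (η/3) (by linarith)
      obtain ⟨i, rfl⟩ := hw
      have hCi : CauchySeq fun k => Fseq (φ k) i := (hφtend i).cauchySeq
      obtain ⟨N, hN⟩ := Metric.cauchySeq_iff.mp hCi (η/3) (by linarith)
      refine ⟨N, fun m hm n hn => ?_⟩
      have h1 : ∀ k, |x' (φ k) z - x' (φ k) (e i)| ≤ ‖z - e i‖ := by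
        intro k
        have := (x' (φ k)).le_opNorm (z - e i)
        rw [hx'norm, one_mul, map_sub] at this
        simpa [Real.norm_eq_abs] using this
      have hzei : ‖z - e i‖ < η/3 := by rwa [← dist_eq_norm]
      have h2 := hN m hm n hn
      rw [Real.dist_eq] at h2 ⊢
      have : x' (φ m) z - x' (φ n) z
          = (x' (φ m) z - x' (φ m) (e i)) + (Fseq (φ m) i - Fseq (φ n) i)
            + (x' (φ n) (e i) - x' (φ n) z) := by
        simp only [hFseq]; ring
      rw [this]
      calc |_ + _ + _| ≤ |(x' (φ m) z - x' (φ m) (e i)) + (Fseq (φ m) i - Fseq (φ n) i)|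
          + |x' (φ n) (e i) - x' (φ n) z| := abs_add_le _ _
        _ ≤ |x' (φ m) z - x' (φ m) (e i)| + |Fseq (φ m) i - Fseq (φ n) i|
          + |x' (φ n) (e i) - x' (φ n) z| := by linarith [abs_add_le (x' (φ m) z - x' (φ m) (e i)) (Fseq (φ m) i - Fseq (φ n) i)]
        _ < η := by
            have h3 := h1 (m); have h4 := h1 (n)
            have h5 : |x' (φ n) (e i) - x' (φ n) z| = |x' (φ n) z - x' (φ n) (e i)| := abs_sub_comm _ _
            rw [h5]
            linarith
    -- apply gliding hump
    set a : ℕ → ℕ → ℝ := fun j i => x' (φ j) (ν i) with ha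
    have hrow : ∀ j, Summable (a j) := by
      intro j
      have := scalarHasSum B hBm hBd Set.univ (x' (φ j))
      rw [Set.indicator_univ] at this
      exact this.summable
    have hasum : ∀ j, Summable fun i => |a j i| := fun j => (hrow j).abs
    have haCau : ∀ M : Set ℕ, CauchySeq fun j => ∑' i, M.indicator (a j) i := by
      intro M
      have heq : ∀ j, ∑' i, M.indicator (a j) i = x' (φ j) (μ (⋃ i ∈ M, B i)) := by
        intro j
        exact (scalarHasSum B hBm hBd M (x' (φ j))).tsum_eq
      simp only [heq]
      exact hCauY _ (hYmem M)
    obtain ⟨N, hN⟩ := glidingHump a hasum haCau (ε/2) (by linarith)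
    -- contradiction
    have hbig : ∀ j, ε ≤ a j (φ j) := by
      intro j
      rw [ha]; dsimp only
      rw [hx'val]
      exact hνnorm (φ j)
    have hNa : ∀ j ≥ N, ε/2 ≤ a N (φ j) := by
      intro j hj
      have hsub : Summable fun i => |a j i - a N i| := ((hrow j).sub (hrow N)).abs
      have hone : |a j (φ j) - a N (φ j)| ≤ ∑' i, |a j i - a N i| :=
        Summable.le_tsum hsub (φ j) (fun _ _ => abs_nonneg _)
      have := (hone.trans (hN j hj N (le_refl N)))
      have := abs_le.mp this
      have := hbig j
      linarith [this]
    have htend : Tendsto (fun j => a N (φ j)) atTop (𝓝 0) :=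
      ((hrow N).tendsto_atTop_zero).comp hφmono.tendsto_atTop
    obtain ⟨j, hj1, hj2⟩ := ((htend.eventually_lt_const (by linarith : (0:ℝ) < ε/2)).and
      (eventually_ge_atTop N)).exists
    linarith [hNa j hj2]
end

section
/- Let μ : Σ → X be a separable countably additive vector measure, (B_k) a μ-dense family in Σ, and (η_k) strictly positive reals with ∑ η_k = 1. For 1 ≤ p < ∞, if f ∈ L¹[μ] satisfies sup_{x'∈X', ‖x'‖≤1} (∑_k η_k |∫_T χ_{B_k} f d|x'μ||^p)^{1/p} = 0, then f = 0 μ-almost everywhere; hence f ↦ ‖f‖_{KS^p[μ]} is a norm on L¹[μ]. -/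
open MeasureTheory ENNReal

variable {T X : Type*} [MeasurableSpace T] [NormedAddCommGroup X] [NormedSpace ℝ X]

/-- The scalar signed measure `x' ∘ μ` associated with a vector measure `μ`. -/
noncomputable def scalarMeas (μ : VectorMeasure T X) (x' : X →L[ℝ] ℝ) : SignedMeasure T :=
  μ.mapRange x'.toLinearMap.toAddMonoidHom x'.continuous

/-- The variation measure `|x'μ|`. -/
noncomputable def scalarVar (μ : VectorMeasure T X) (x' : X →L[ℝ] ℝ) : Measure T :=
  (scalarMeas μ x').totalVariation

/-- The integral of a real function with respect to a signed measure. -/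
noncomputable def signedIntegral (s : SignedMeasure T) (f : T → ℝ) : ℝ :=
  ∫ t, f t ∂s.toJordanDecomposition.posPart - ∫ t, f t ∂s.toJordanDecomposition.negPart

/-- Kluvánek–Lewis `μ`-integrability. -/
def KLIntegrable (μ : VectorMeasure T X) (f : T → ℝ) : Prop :=
  (∀ x' : X →L[ℝ] ℝ, Integrable f (scalarVar μ x')) ∧
  ∀ A : Set T, MeasurableSet A → ∃ xA : X, ∀ x' : X →L[ℝ] ℝ,
    x' xA = signedIntegral (scalarMeas μ x') (A.indicator f)

/-- The semivariation `‖μ‖(A) = sup_{‖x'‖ ≤ 1} |x'μ|(A)`. -/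
noncomputable def semivar (μ : VectorMeasure T X) (A : Set T) : ℝ≥0∞ :=
  ⨆ x' : {y : X →L[ℝ] ℝ // ‖y‖ ≤ 1}, scalarVar μ x'.1 A

/-- `(B k)` is a `μ`-dense family witnessing the separability of `μ`. -/
def MuDense (μ : VectorMeasure T X) (B : ℕ → Set T) : Prop :=
  (∀ k, MeasurableSet (B k)) ∧
  ∀ A : Set T, MeasurableSet A → ∀ ε : ℝ, 0 < ε →
    ∃ k, semivar μ (symmDiff A (B k)) ≤ ENNReal.ofReal ε

/-- The Kuelbs–Steadman norm `‖f‖_{KS^p[μ]}` (`1 ≤ p < ∞`). -/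
noncomputable def ksNorm (μ : VectorMeasure T X) (B : ℕ → Set T) (η : ℕ → ℝ) (p : ℝ)
    (f : T → ℝ) : ℝ≥0∞ :=
  ⨆ x' : {y : X →L[ℝ] ℝ // ‖y‖ ≤ 1},
    (∑' k, ENNReal.ofReal (η k * |∫ t, (B k).indicator f t ∂scalarVar μ x'.1| ^ p)) ^ (1 / p)

/-- The Kuelbs–Steadman norm `‖f‖_{KS^∞[μ]}`. -/
noncomputable def ksInfNorm (μ : VectorMeasure T X) (B : ℕ → Set T) (f : T → ℝ) : ℝ≥0∞ :=
  ⨆ x' : {y : X →L[ℝ] ℝ // ‖y‖ ≤ 1},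
    ⨆ k : ℕ, ENNReal.ofReal |∫ t, (B k).indicator f t ∂scalarVar μ x'.1|

/-- if `‖f‖_{KS^p[μ]} = 0` for some `1 ≤ p < ∞` and `f ∈ L¹[μ]`, then `f = 0`
`μ`-almost everywhere (`μ` vanishes on every measurable subset of `{f ≠ 0}`); hence
`‖·‖_{KS^p[μ]}` is a norm on `L¹[μ]`. -/
theorem stmt_8 (μ : VectorMeasure T X) (B : ℕ → Set T) (hB : MuDense μ B)
    (η : ℕ → ℝ) (hη : ∀ k, 0 < η k) (hηsum : ∑' k, η k = 1)
    (p : ℝ) (hp : 1 ≤ p) (f : T → ℝ) (hmeas : Measurable f) (hf : KLIntegrable μ f)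
    (h0 : ksNorm μ B η p f = 0) :
    ∀ A : Set T, MeasurableSet A → A ⊆ {t | f t ≠ 0} → μ A = 0 := by
  have hp0 : (0:ℝ) < p := lt_of_lt_of_le one_pos hp
  have key : ∀ x' : X →L[ℝ] ℝ, ‖x'‖ ≤ 1 → ∀ A : Set T, MeasurableSet A →
      A ⊆ {t | f t ≠ 0} → scalarVar μ x' A = 0 := by
    intro x' hx' A hA hsub
    set ν := scalarVar μ x' with hν
    have hint : Integrable f ν := hf.1 x'
    -- Step 1: the integrals over the dense family vanish
    have step1 : ∀ k, ∫ t, (B k).indicator f t ∂ν = 0 := by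
      intro k
      have h1 : (∑' k, ENNReal.ofReal (η k * |∫ t, (B k).indicator f t ∂ν| ^ p)) ^ (1 / p)
          = 0 := by
        refine le_antisymm ?_ (zero_le)
        rw [← h0]
        exact le_iSup (fun x'' : {y : X →L[ℝ] ℝ // ‖y‖ ≤ 1} =>
          (∑' k, ENNReal.ofReal
            (η k * |∫ t, (B k).indicator f t ∂scalarVar μ x''.1| ^ p)) ^ (1 / p)) ⟨x', hx'⟩
      have h2 : (∑' k, ENNReal.ofReal (η k * |∫ t, (B k).indicator f t ∂ν| ^ p)) = 0 := by
        rcases ENNReal.rpow_eq_zero_iff.mp h1 with ⟨h, _⟩ | ⟨_, h⟩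
        · exact h
        · exfalso
          have : (0:ℝ) < 1 / p := by positivity
          linarith
      have h3 := ENNReal.tsum_eq_zero.mp h2 k
      rw [ENNReal.ofReal_eq_zero] at h3
      have hnn : 0 ≤ |∫ t, (B k).indicator f t ∂ν| ^ p :=
        Real.rpow_nonneg (abs_nonneg _) p
      have h4 : |∫ t, (B k).indicator f t ∂ν| ^ p = 0 := by nlinarith [hη k]
      have h5 : |∫ t, (B k).indicator f t ∂ν| = 0 := by
        rcases (Real.rpow_eq_zero_iff_of_nonneg (abs_nonneg _)).mp h4 with ⟨h, _⟩
        exact h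
      exact abs_eq_zero.mp h5
    -- Step 2: all set integrals of f vanish
    have step2 : ∀ S : Set T, MeasurableSet S → ∫ t in S, f t ∂ν = 0 := by
      intro S hS
      by_contra hne
      set ε := |∫ t in S, f t ∂ν| with hε
      have hεpos : 0 < ε := abs_pos.mpr hne
      have hlt : ∫⁻ t, ‖f t‖₊ ∂ν ≠ ∞ := hint.2.ne
      obtain ⟨δ, hδ0, hδ⟩ := exists_pos_setLIntegral_lt_of_measure_lt hlt
        (ε := ENNReal.ofReal ε) (by simp [hεpos])
      obtain ⟨c, hc0, hcδ⟩ := exists_between hδ0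
      have hcne : c ≠ ∞ := (hcδ.trans_le le_top).ne
      have hc0' : 0 < c.toReal := ENNReal.toReal_pos hc0.ne' hcne
      obtain ⟨k, hk⟩ := hB.2 S hS c.toReal hc0'
      set D := symmDiff S (B k) with hD
      have hDmeas : MeasurableSet D := hS.symmDiff (hB.1 k)
      have hνD : ν D < δ := by
        calc ν D ≤ semivar μ D :=
              le_iSup (fun x'' : {y : X →L[ℝ] ℝ // ‖y‖ ≤ 1} =>
                scalarVar μ x''.1 D) ⟨x', hx'⟩
          _ ≤ ENNReal.ofReal c.toReal := hk
          _ = c := ENNReal.ofReal_toReal hcne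
          _ < δ := hcδ
      have hlint := hδ _ hνD
      have e1 : ∫ t in B k, f t ∂ν = 0 := by
        rw [← integral_indicator (hB.1 k)]; exact step1 k
      have hintS : Integrable (S.indicator f) ν := hint.indicator hS
      have hintB : Integrable ((B k).indicator f) ν := hint.indicator (hB.1 k)
      have e2 : ε = |∫ t, (S.indicator f t - (B k).indicator f t) ∂ν| := by
        rw [integral_sub hintS hintB, integral_indicator hS, integral_indicator (hB.1 k),
          e1, sub_zero]
      have hind : ∀ t, |S.indicator f t - (B k).indicator f t|
          ≤ D.indicator (fun t => |f t|) t := by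
        intro t
        by_cases h1 : t ∈ S <;> by_cases h2 : t ∈ B k <;>
          simp [Set.indicator_apply, h1, h2, hD, Set.mem_symmDiff, abs_nonneg]
      have e3 : |∫ t, (S.indicator f t - (B k).indicator f t) ∂ν|
          ≤ ∫ t, D.indicator (fun t => |f t|) t ∂ν := by
        calc |∫ t, (S.indicator f t - (B k).indicator f t) ∂ν|
            ≤ ∫ t, |S.indicator f t - (B k).indicator f t| ∂ν := by
              simpa [Real.norm_eq_abs] using
                norm_integral_le_integral_norm (μ := ν)
                  (fun t => S.indicator f t - (B k).indicator f t)
          _ ≤ ∫ t, D.indicator (fun t => |f t|) t ∂ν :=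
              integral_mono ((hintS.sub hintB).abs) (hint.abs.indicator hDmeas) hind
      have e4 : ∫ t, D.indicator (fun t => |f t|) t ∂ν < ε := by
        rw [integral_indicator hDmeas]
        have e5 : ∫ t in D, |f t| ∂ν = (∫⁻ t in D, ‖f t‖₊ ∂ν).toReal := by
          simp_rw [← Real.norm_eq_abs]
          exact integral_norm_eq_lintegral_enorm hmeas.aestronglyMeasurable
        rw [e5]
        exact ENNReal.toReal_lt_of_lt_ofReal hlint
      have : ε < ε := lt_of_le_of_lt (e2 ▸ e3) e4
      exact lt_irrefl _ this
    have hae : f =ᵐ[ν] 0 :=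
      hint.ae_eq_zero_of_forall_setIntegral_eq_zero fun s hs _ => step2 s hs
    have hnull : ν {t | f t ≠ 0} = 0 := by
      have := hae
      rw [Filter.EventuallyEq, ae_iff] at this
      simpa using this
    exact le_antisymm ((measure_mono hsub).trans hnull.le) (zero_le)
  intro A hA hsub
  by_contra hne
  obtain ⟨g, hg1, hgx⟩ := exists_dual_vector ℝ (μ A) (norm_ne_zero_iff.mpr hne)
  have h1 : scalarVar μ g A = 0 := key g hg1.le A hA hsub
  have h2 : scalarMeas μ g A = 0 := SignedMeasure.null_of_totalVariation_zero _ h1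
  have h3 : g (μ A) = 0 := by exact h2
  have h4 : (‖μ A‖ : ℝ) = 0 := hgx.symm.trans h3
  exact hne (norm_eq_zero.mp h4)
end

section
/- Let μ : Σ → X be a separable countably additive vector measure, (B_k) a μ-dense family with ‖μ‖(B_k) ≤ M := ‖μ‖(T) + 1 for all k, and (η_k) positive reals summing to 1. For all 1 ≤ q < ∞ and 1 ≤ p < ∞ and all f ∈ L^q[μ], ‖f‖_{KS^p[μ]} ≤ M ‖f‖_{L^q[μ]}; hence the inclusion L^q[μ] ⊂ KS^p[μ] is continuous. -/
open MeasureTheory ENNReal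

variable {T X : Type*} [MeasurableSpace T] [NormedAddCommGroup X] [NormedSpace ℝ X]

/-- The `L^q[μ]` norm, `1 ≤ q < ∞`. -/
noncomputable def lqNorm (μ : VectorMeasure T X) (q : ℝ) (f : T → ℝ) : ℝ≥0∞ :=
  ⨆ x' : {y : X →L[ℝ] ℝ // ‖y‖ ≤ 1},
    ENNReal.ofReal ((∫ t, |f t| ^ q ∂scalarVar μ x'.1) ^ (1 / q))

/-- if `‖μ‖(B k) ≤ M = ‖μ‖(T) + 1` for all `k`, then for all `1 ≤ p, q < ∞`
and `f ∈ L^q[μ]`, `‖f‖_{KS^p[μ]} ≤ M ‖f‖_{L^q[μ]}`; hence `L^q[μ] ⊆ KS^p[μ]`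
continuously. -/
theorem stmt_9 (μ : VectorMeasure T X) (B : ℕ → Set T) (hB : MuDense μ B)
    (η : ℕ → ℝ) (hη : ∀ k, 0 < η k) (hηsum : ∑' k, η k = 1)
    (M : ℝ) (hM : ENNReal.ofReal M = semivar μ Set.univ + 1)
    (hMk : ∀ k, semivar μ (B k) ≤ ENNReal.ofReal M)
    (p q : ℝ) (hp : 1 ≤ p) (hq : 1 ≤ q)
    (f : T → ℝ) (hmeas : Measurable f) (hf : KLIntegrable μ f)
    (hfq : KLIntegrable μ fun t => |f t| ^ q) :
    ksNorm μ B η p f ≤ ENNReal.ofReal M * lqNorm μ q f := by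
  have hq0 : (0:ℝ) < q := lt_of_lt_of_le one_pos hq
  have hp0 : (0:ℝ) < p := lt_of_lt_of_le one_pos hp
  have hM1 : (1:ℝ≥0∞) ≤ ENNReal.ofReal M := by rw [hM]; exact le_add_self
  rw [ksNorm]
  apply iSup_le
  intro x'
  haveI : IsFiniteMeasure (scalarVar μ x'.1) := by
    unfold scalarVar SignedMeasure.totalVariation; infer_instance
  set ν := scalarVar μ x'.1 with hν
  set a : ℝ := (∫ t, |f t| ^ q ∂ν) ^ (1/q) with ha
  have hint0 : 0 ≤ ∫ t, |f t| ^ q ∂ν :=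
    integral_nonneg fun t => Real.rpow_nonneg (abs_nonneg _) q
  have ha0 : 0 ≤ a := Real.rpow_nonneg hint0 _
  have hKle : ENNReal.ofReal a ≤ lqNorm μ q f :=
    le_iSup (fun y : {y : X →L[ℝ] ℝ // ‖y‖ ≤ 1} =>
      ENNReal.ofReal ((∫ t, |f t| ^ q ∂scalarVar μ y.1) ^ (1/q))) x'
  -- eLpNorm computation
  have heq : eLpNorm f (ENNReal.ofReal q) ν = ENNReal.ofReal a := by
    rw [eLpNorm_eq_lintegral_rpow_enorm_toReal (by simp [hq0]) (by simp),
      ENNReal.toReal_ofReal hq0.le]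
    have : ∀ t, ‖f t‖ₑ ^ q = ENNReal.ofReal (|f t| ^ q) := by
      intro t
      rw [Real.enorm_eq_ofReal_abs, ENNReal.ofReal_rpow_of_nonneg (abs_nonneg _) hq0.le]
    simp_rw [this]
    rw [← ofReal_integral_eq_lintegral_ofReal (hfq.1 x'.1)
      (Filter.Eventually.of_forall fun t => Real.rpow_nonneg (abs_nonneg _) q),
      ENNReal.ofReal_rpow_of_nonneg hint0 (by positivity)]
  -- key bound
  have key : ∀ k, ENNReal.ofReal |∫ t, (B k).indicator f t ∂ν|
      ≤ ENNReal.ofReal a * ENNReal.ofReal M := by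
    intro k
    have hmk : ν (B k) ≤ ENNReal.ofReal M :=
      le_trans (le_iSup (fun y : {y : X →L[ℝ] ℝ // ‖y‖ ≤ 1} =>
        scalarVar μ y.1 (B k)) x') (hMk k)
    have hBk : MeasurableSet (B k) := hB.1 k
    calc ENNReal.ofReal |∫ t, (B k).indicator f t ∂ν|
        = (‖∫ t, (B k).indicator f t ∂ν‖₊ : ℝ≥0∞) := (Real.enorm_eq_ofReal_abs _).symm
      _ ≤ ∫⁻ t, ‖(B k).indicator f t‖₊ ∂ν := enorm_integral_le_lintegral_enorm _
      _ = ∫⁻ t, (B k).indicator (fun s => (‖f s‖₊ : ℝ≥0∞)) t ∂ν := by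
          congr 1; funext t
          by_cases h : t ∈ B k <;> simp [Set.indicator_apply, h]
      _ = ∫⁻ t in B k, ‖f t‖₊ ∂ν := lintegral_indicator hBk _
      _ = eLpNorm f 1 (ν.restrict (B k)) := (eLpNorm_one_eq_lintegral_enorm (f := f)).symm
      _ ≤ eLpNorm f (ENNReal.ofReal q) (ν.restrict (B k)) *
            (ν.restrict (B k)) Set.univ ^ (1/(1:ℝ≥0∞).toReal - 1/(ENNReal.ofReal q).toReal) :=
          eLpNorm_le_eLpNorm_mul_rpow_measure_univ
            (by exact_mod_cast ENNReal.one_le_ofReal.mpr hq) hmeas.aestronglyMeasurable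
      _ ≤ ENNReal.ofReal a * ENNReal.ofReal M := by
          rw [Measure.restrict_apply_univ]
          have he : 1/(1:ℝ≥0∞).toReal - 1/(ENNReal.ofReal q).toReal = 1 - 1/q := by
            simp [ENNReal.toReal_ofReal hq0.le]
          rw [he]
          have hqq : 1/q ≤ 1 := by rw [div_le_one hq0]; exact hq
          have hq1 : (0:ℝ) ≤ 1/q := by positivity
          have h1 : eLpNorm f (ENNReal.ofReal q) (ν.restrict (B k)) ≤ ENNReal.ofReal a :=
            le_trans (eLpNorm_mono_measure f Measure.restrict_le_self) heq.le
          have h2 : ν (B k) ^ (1 - 1/q) ≤ ENNReal.ofReal M := by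
            calc ν (B k) ^ (1 - 1/q) ≤ ENNReal.ofReal M ^ (1 - 1/q) :=
                  ENNReal.rpow_le_rpow hmk (by linarith)
              _ ≤ ENNReal.ofReal M ^ (1:ℝ) :=
                  ENNReal.rpow_le_rpow_of_exponent_le hM1 (by linarith)
              _ = ENNReal.ofReal M := ENNReal.rpow_one _
          exact mul_le_mul' h1 h2
  -- sum it up
  have hsummable : Summable η := by
    by_contra h
    rw [tsum_eq_zero_of_not_summable h] at hηsum
    norm_num at hηsum
  have hsum1 : ∑' k, ENNReal.ofReal (η k) = 1 := by
    rw [← ENNReal.ofReal_tsum_of_nonneg (fun k => (hη k).le) hsummable, hηsum,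
      ENNReal.ofReal_one]
  set K := ENNReal.ofReal a * ENNReal.ofReal M with hK
  have hterm : ∀ k, ENNReal.ofReal (η k * |∫ t, (B k).indicator f t ∂ν| ^ p)
      ≤ ENNReal.ofReal (η k) * K ^ p := by
    intro k
    rw [ENNReal.ofReal_mul (hη k).le,
      ← ENNReal.ofReal_rpow_of_nonneg (abs_nonneg _) hp0.le]
    gcongr
    exact key k
  calc (∑' k, ENNReal.ofReal (η k * |∫ t, (B k).indicator f t ∂ν| ^ p)) ^ (1/p)
      ≤ (∑' k, ENNReal.ofReal (η k) * K ^ p) ^ (1/p) := by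
        gcongr with k; exact hterm k
    _ = ((∑' k, ENNReal.ofReal (η k)) * K ^ p) ^ (1/p) := by rw [ENNReal.tsum_mul_right]
    _ = (K ^ p) ^ (1/p) := by rw [hsum1, one_mul]
    _ = K := by
        rw [← ENNReal.rpow_mul, mul_one_div_cancel hp0.ne', ENNReal.rpow_one]
    _ = ENNReal.ofReal M * ENNReal.ofReal a := mul_comm _ _
    _ ≤ ENNReal.ofReal M * lqNorm μ q f := by gcongr
end

section
/- Let X' be separable with countable dense subset {x'_h : h ∈ ℕ} in the closed unit ball, μ : Σ → X a separable countably additive vector measure, (B_k) a μ-dense family, and (η_k), (ω_h) positive reals each summing to 1. For 1 ≤ p < ∞, if f ∈ L¹[μ] satisfies [∑_h ω_h ∑_k η_k |∫_T χ_{B_k} f d|x'_h μ||^p]^{1/p} = 0, then f = 0 μ-almost everywhere; hence ‖·‖_{KS^p[wτμ]} is a norm on L¹[μ]. -/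
open MeasureTheory ENNReal

variable {T X : Type*} [MeasurableSpace T] [NormedAddCommGroup X] [NormedSpace ℝ X]

/-- if `X'` is separable (witnessed by `(x'h)` dense in the unit ball of `X'`)
and the weak-topology norm `‖f‖_{KS^p[wτμ]}` of `f ∈ L¹[μ]` vanishes for some `1 ≤ p < ∞`,
then `f = 0` `μ`-almost everywhere; hence `‖·‖_{KS^p[wτμ]}` is a norm on `L¹[μ]`. -/
theorem stmt_15 (μ : VectorMeasure T X) (B : ℕ → Set T) (hB : MuDense μ B)
    (η ω : ℕ → ℝ) (hη : ∀ k, 0 < η k) (hηsum : ∑' k, η k = 1)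
    (hω : ∀ h, 0 < ω h) (hωsum : ∑' h, ω h = 1)
    (x'h : ℕ → X →L[ℝ] ℝ) (hx'h : ∀ h, ‖x'h h‖ ≤ 1)
    (hdense : ∀ y : X →L[ℝ] ℝ, ‖y‖ ≤ 1 → ∀ ε : ℝ, 0 < ε → ∃ h, ‖x'h h - y‖ ≤ ε)
    (p : ℝ) (hp : 1 ≤ p) (f : T → ℝ) (hmeas : Measurable f) (hf : KLIntegrable μ f)
    (h0 : (∑' h, ENNReal.ofReal (ω h) *
      ∑' k, ENNReal.ofReal (η k * |∫ t, (B k).indicator f t ∂scalarVar μ (x'h h)| ^ p))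
        ^ (1 / p) = 0) :
    ∀ A : Set T, MeasurableSet A → A ⊆ {t | f t ≠ 0} → μ A = 0 := by
  classical
  intro A hA hAf
  have hp0 : (0:ℝ) < p := lt_of_lt_of_le one_pos hp
  -- Step 1: all the basic integrals vanish
  have h1 : ∀ h k, ∫ t, (B k).indicator f t ∂scalarVar μ (x'h h) = 0 := by
    have h0' : (∑' h, ENNReal.ofReal (ω h) *
        ∑' k, ENNReal.ofReal (η k * |∫ t, (B k).indicator f t ∂scalarVar μ (x'h h)| ^ p)) = 0 := by
      rcases (ENNReal.rpow_eq_zero_iff).mp h0 with ⟨h, _⟩ | ⟨_, h⟩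
      · exact h
      · exfalso; have : (0:ℝ) < 1 / p := by positivity
        linarith
    intro h k
    have hh := (ENNReal.tsum_eq_zero.mp h0') h
    have hωh : ENNReal.ofReal (ω h) ≠ 0 := by
      simp [ENNReal.ofReal_eq_zero, not_le, hω h]
    have hinner : (∑' k, ENNReal.ofReal
        (η k * |∫ t, (B k).indicator f t ∂scalarVar μ (x'h h)| ^ p)) = 0 := by
      rcases mul_eq_zero.mp hh with h' | h'
      · exact absurd h' hωh
      · exact h'
    have hk := (ENNReal.tsum_eq_zero.mp hinner) k
    rw [ENNReal.ofReal_eq_zero] at hk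
    have habs : |∫ t, (B k).indicator f t ∂scalarVar μ (x'h h)| ^ p = 0 := by
      have h1 : (0:ℝ) ≤ |∫ t, (B k).indicator f t ∂scalarVar μ (x'h h)| ^ p :=
        Real.rpow_nonneg (abs_nonneg _) _
      nlinarith [hη k, mul_nonneg (hη k).le h1]
    have := (Real.rpow_eq_zero (abs_nonneg _) (ne_of_gt hp0)).mp habs
    exact abs_eq_zero.mp this
  -- finiteness of the total variation measures
  have hfin : ∀ h : ℕ, IsFiniteMeasure (scalarVar μ (x'h h)) := by
    intro h
    unfold scalarVar SignedMeasure.totalVariation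
    infer_instance
  -- Step 2: for each h, the integral of f over every measurable set vanishes
  have h2 : ∀ (h : ℕ) (S : Set T), MeasurableSet S →
      ∫ t in S, f t ∂scalarVar μ (x'h h) = 0 := by
    intro h S hS
    set ν := scalarVar μ (x'h h) with hν
    haveI := hfin h
    have hint : Integrable f ν := hf.1 (x'h h)
    have key : ∀ ε : ℝ, 0 < ε → |∫ t in S, f t ∂ν| ≤ ε := by
      intro ε hε
      obtain ⟨δ, hδpos, hδ⟩ := (memLp_one_iff_integrable.mpr hint).eLpNorm_indicator_le
        le_rfl ENNReal.one_ne_top hε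
      obtain ⟨k, hk⟩ := hB.2 S hS δ hδpos
      have hBk : MeasurableSet (B k) := hB.1 k
      have hsd : MeasurableSet (symmDiff S (B k)) :=
        (hS.diff hBk).union (hBk.diff hS)
      have hνsd : ν (symmDiff S (B k)) ≤ ENNReal.ofReal δ := by
        refine le_trans ?_ hk
        exact le_iSup (fun x' : {y : X →L[ℝ] ℝ // ‖y‖ ≤ 1} =>
          scalarVar μ x'.1 (symmDiff S (B k))) ⟨x'h h, hx'h h⟩
      have hsmall := hδ _ hsd hνsd
      -- translate the eLpNorm bound into an integral bound
      have hIsd : ∫ t in symmDiff S (B k), |f t| ∂ν ≤ ε := by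
        have heq : ENNReal.ofReal (∫ t in symmDiff S (B k), |f t| ∂ν)
            = eLpNorm ((symmDiff S (B k)).indicator f) 1 ν := by
          rw [eLpNorm_indicator_eq_eLpNorm_restrict hsd, eLpNorm_one_eq_lintegral_enorm,
            ofReal_integral_eq_lintegral_ofReal (hint.integrableOn.abs)
              (ae_of_all _ fun t => abs_nonneg _)]
          congr 1
          funext t
          rw [← Real.norm_eq_abs, ofReal_norm]
        have : ENNReal.ofReal (∫ t in symmDiff S (B k), |f t| ∂ν) ≤ ENNReal.ofReal ε := by
          rw [heq]; exact hsmall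
        exact (ENNReal.ofReal_le_ofReal_iff hε.le).mp this
      -- split the integrals
      have hIS : ∫ t in S, f t ∂ν
          = (∫ t in S \ B k, f t ∂ν) + ∫ t in S ∩ B k, f t ∂ν := by
        rw [← setIntegral_union (Set.disjoint_sdiff_inter) (hS.inter hBk)
          hint.integrableOn hint.integrableOn, Set.diff_union_inter]
      have hIB : ∫ t in B k, f t ∂ν
          = (∫ t in B k \ S, f t ∂ν) + ∫ t in B k ∩ S, f t ∂ν := by
        rw [← setIntegral_union (Set.disjoint_sdiff_inter) (hBk.inter hS)
          hint.integrableOn hint.integrableOn, Set.diff_union_inter]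
      have hIB0 : ∫ t in B k, f t ∂ν = 0 := by
        have := h1 h k
        rwa [integral_indicator hBk] at this
      have hdiff : ∫ t in S, f t ∂ν
          = (∫ t in S \ B k, f t ∂ν) - ∫ t in B k \ S, f t ∂ν := by
        have hcomm : S ∩ B k = B k ∩ S := Set.inter_comm _ _
        rw [hIS]
        have := hIB0
        rw [hIB] at this
        rw [hcomm]
        linarith
      have hsplit : ∫ t in symmDiff S (B k), |f t| ∂ν
          = (∫ t in S \ B k, |f t| ∂ν) + ∫ t in B k \ S, |f t| ∂ν := by
        rw [← setIntegral_union ?_ (hBk.diff hS)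
          hint.integrableOn.abs hint.integrableOn.abs]
        · rfl
        · exact disjoint_sdiff_sdiff
      have b1 : |∫ t in S \ B k, f t ∂ν| ≤ ∫ t in S \ B k, |f t| ∂ν := by
        simpa [Real.norm_eq_abs] using
          norm_integral_le_integral_norm (μ := ν.restrict (S \ B k)) f
      have b2 : |∫ t in B k \ S, f t ∂ν| ≤ ∫ t in B k \ S, |f t| ∂ν := by
        simpa [Real.norm_eq_abs] using
          norm_integral_le_integral_norm (μ := ν.restrict (B k \ S)) f
      calc |∫ t in S, f t ∂ν|
          = |(∫ t in S \ B k, f t ∂ν) - ∫ t in B k \ S, f t ∂ν| := by rw [hdiff]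
        _ ≤ |∫ t in S \ B k, f t ∂ν| + |∫ t in B k \ S, f t ∂ν| := abs_sub _ _
        _ ≤ (∫ t in S \ B k, |f t| ∂ν) + ∫ t in B k \ S, |f t| ∂ν := add_le_add b1 b2
        _ = ∫ t in symmDiff S (B k), |f t| ∂ν := hsplit.symm
        _ ≤ ε := hIsd
    have : |∫ t in S, f t ∂ν| = 0 := by
      by_contra hne
      have hpos : 0 < |∫ t in S, f t ∂ν| := lt_of_le_of_ne (abs_nonneg _) (Ne.symm hne)
      have := key (|∫ t in S, f t ∂ν| / 2) (by linarith)
      linarith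
    exact abs_eq_zero.mp this
  -- Step 3: ν A = 0 for each h
  have h3 : ∀ h : ℕ, scalarVar μ (x'h h) A = 0 := by
    intro h
    set ν := scalarVar μ (x'h h) with hν
    haveI := hfin h
    have hint : Integrable f ν := hf.1 (x'h h)
    have hApos : MeasurableSet (A ∩ {t | 0 < f t}) := hA.inter (measurableSet_lt measurable_const hmeas)
    have hAneg : MeasurableSet (A ∩ {t | f t < 0}) := hA.inter (measurableSet_lt hmeas measurable_const)
    have hp1 : ν (A ∩ {t | 0 < f t}) = 0 := by
      have hi := h2 h _ hApos
      have hnn : 0 ≤ᵐ[ν.restrict (A ∩ {t | 0 < f t})] f :=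
        ae_restrict_of_forall_mem hApos fun t ht => ht.2.le
      have hiff := setIntegral_pos_iff_support_of_nonneg_ae hnn hint.integrableOn
      have hsub : A ∩ {t | 0 < f t} ⊆ Function.support f ∩ (A ∩ {t | 0 < f t}) :=
        fun t ht => ⟨ne_of_gt ht.2, ht⟩
      by_contra hne
      have hpos : 0 < ν (Function.support f ∩ (A ∩ {t | 0 < f t})) :=
        lt_of_lt_of_le (pos_iff_ne_zero.mpr hne) (measure_mono hsub)
      have := hiff.mpr hpos
      rw [hi] at this
      exact lt_irrefl 0 this
    have hp2 : ν (A ∩ {t | f t < 0}) = 0 := by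
      have hi : ∫ t in A ∩ {t | f t < 0}, (-f) t ∂ν = 0 := by
        simp only [Pi.neg_apply]
        rw [integral_neg]
        exact neg_eq_zero.mpr (h2 h _ hAneg)
      have hnn : 0 ≤ᵐ[ν.restrict (A ∩ {t | f t < 0})] (-f) :=
        ae_restrict_of_forall_mem hAneg fun t ht => by
          simpa using ht.2.le
      have hiff := setIntegral_pos_iff_support_of_nonneg_ae hnn hint.neg.integrableOn
      have hsub : A ∩ {t | f t < 0} ⊆ Function.support (-f) ∩ (A ∩ {t | f t < 0}) :=
        fun t ht => ⟨by simpa using ne_of_lt ht.2, ht⟩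
      by_contra hne
      have hpos : 0 < ν (Function.support (-f) ∩ (A ∩ {t | f t < 0})) :=
        lt_of_lt_of_le (pos_iff_ne_zero.mpr hne) (measure_mono hsub)
      have := hiff.mpr hpos
      rw [hi] at this
      exact lt_irrefl 0 this
    have hcover : A ⊆ (A ∩ {t | 0 < f t}) ∪ (A ∩ {t | f t < 0}) := by
      intro t ht
      rcases lt_trichotomy (f t) 0 with h | h | h
      · exact Or.inr ⟨ht, h⟩
      · exact absurd h (hAf ht)
      · exact Or.inl ⟨ht, h⟩
    have := measure_mono (μ := ν) hcover
    have hle := le_trans this (measure_union_le _ _)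
    rw [hp1, hp2, add_zero] at hle
    exact le_antisymm hle zero_le
  -- Step 4: x'h h (μ A) = 0, then all functionals vanish, then μ A = 0
  have h4 : ∀ h : ℕ, x'h h (μ A) = 0 := by
    intro h
    have := (scalarMeas μ (x'h h)).null_of_totalVariation_zero (h3 h)
    unfold scalarMeas at this; exact this
  have h5 : ∀ y : X →L[ℝ] ℝ, y (μ A) = 0 := by
    have hball : ∀ y : X →L[ℝ] ℝ, ‖y‖ ≤ 1 → y (μ A) = 0 := by
      intro y hy
      have key : ∀ ε : ℝ, 0 < ε → |y (μ A)| ≤ ε * ‖μ A‖ := by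
        intro ε hε
        obtain ⟨h, hh⟩ := hdense y hy ε hε
        have : |y (μ A) - x'h h (μ A)| ≤ ε * ‖μ A‖ := by
          have : ‖(y - x'h h) (μ A)‖ ≤ ‖y - x'h h‖ * ‖μ A‖ :=
            (y - x'h h).le_opNorm _
          rw [ContinuousLinearMap.sub_apply] at this
          refine le_trans ?_ (le_trans this ?_)
          · rw [Real.norm_eq_abs]
          · have : ‖y - x'h h‖ ≤ ε := by
              rw [← norm_neg]; simpa [neg_sub] using hh
            exact mul_le_mul_of_nonneg_right this (norm_nonneg _)
        simpa [h4 h] using this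
      by_contra hne
      rcases eq_or_ne (‖μ A‖) 0 with hz | hz
      · have := key 1 one_pos
        rw [hz, mul_zero] at this
        exact hne (abs_eq_zero.mp (le_antisymm this (abs_nonneg _)))
      · have hnorm : 0 < ‖μ A‖ := lt_of_le_of_ne (norm_nonneg _) (Ne.symm hz)
        have habs : 0 < |y (μ A)| := abs_pos.mpr hne
        have := key (|y (μ A)| / (2 * ‖μ A‖)) (by positivity)
        rw [div_mul_eq_mul_div, mul_comm] at this
        have h2' : ‖μ A‖ * |y (μ A)| / (2 * ‖μ A‖) = |y (μ A)| / 2 := by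
          field_simp
        rw [h2'] at this
        linarith
    intro y
    have hc : (0:ℝ) < ‖y‖ + 1 := by positivity
    have hy' : ‖(‖y‖ + 1)⁻¹ • y‖ ≤ 1 := by
      have hns := norm_smul ((‖y‖ + 1)⁻¹) y
      rw [hns, Real.norm_eq_abs, abs_of_pos (inv_pos.mpr hc), inv_mul_le_iff₀ hc, mul_one]
      linarith
    have := hball _ hy'
    rw [ContinuousLinearMap.smul_apply, smul_eq_mul] at this
    rcases mul_eq_zero.mp this with h' | h'
    · exact absurd h' (by positivity)
    · exact h'
  exact NormedSpace.eq_zero_of_forall_dual_eq_zero ℝ h5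
end

section
/- With X' separable, {x'_h} a countable dense subset of the unit ball of X', and weights (η_k), (ω_h) positive summing to 1, the bilinear functional ⟨f,g⟩ = ∑_h ω_h ∑_k η_k (∫_T χ_{B_k} f d|x'_h μ|)(∫_T χ_{B_k} g d|x'_h μ|) is an inner product on L¹[μ] (positive definite, symmetric, bilinear), and ‖f‖_{KS²[wτμ]} = ⟨f,f⟩^{1/2}. -/
open MeasureTheory ENNReal

variable {T X : Type*} [MeasurableSpace T] [NormedAddCommGroup X] [NormedSpace ℝ X]

/-- The scalar quantities `∫_T χ_{B_k} f d|x'μ|` entering the Kuelbs–Steadman norms. -/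
noncomputable def ksIntegral (μ : VectorMeasure T X) (B : ℕ → Set T) (f : T → ℝ)
    (x' : X →L[ℝ] ℝ) (k : ℕ) : ℝ :=
  ∫ t, (B k).indicator f t ∂scalarVar μ x'

/-- The bilinear functional `⟨f,g⟩ = ∑_h ω_h ∑_k η_k (∫ χ_{B_k} f d|x'_h μ|)(∫ χ_{B_k} g d|x'_h μ|)`. -/
noncomputable def ksBilin (μ : VectorMeasure T X) (B : ℕ → Set T) (η ω : ℕ → ℝ)
    (x'h : ℕ → X →L[ℝ] ℝ) (f g : T → ℝ) : ℝ :=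
  ∑' h, ω h * ∑' k, η k * (ksIntegral μ B f (x'h h) k * ksIntegral μ B g (x'h h) k)

section Toolbox
variable {T : Type*} [MeasurableSpace T]
lemma sm_eq_toReal (s : SignedMeasure T) {E : Set T} (hE : MeasurableSet E) :
    s E = (s.toJordanDecomposition.posPart E).toReal
        - (s.toJordanDecomposition.negPart E).toReal := by
  conv_lhs => rw [← s.toSignedMeasure_toJordanDecomposition]
  rw [JordanDecomposition.toSignedMeasure, Measure.toSignedMeasure_sub_apply hE]
  rfl

lemma tv_apply (s : SignedMeasure T) (E : Set T) :
    s.totalVariation E = s.toJordanDecomposition.posPart E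
      + s.toJordanDecomposition.negPart E := rfl

lemma tv_ne_top (s : SignedMeasure T) (E : Set T) : s.totalVariation E ≠ ⊤ := by
  rw [tv_apply]
  exact ENNReal.add_ne_top.2 ⟨measure_ne_top _ _, measure_ne_top _ _⟩

lemma apply_le_pos (s : SignedMeasure T) {E F : Set T} (hF : MeasurableSet F) (hFE : F ⊆ E) :
    s F ≤ (s.toJordanDecomposition.posPart E).toReal := by
  rw [sm_eq_toReal s hF]
  have h1 : (s.toJordanDecomposition.posPart F).toReal
      ≤ (s.toJordanDecomposition.posPart E).toReal :=
    ENNReal.toReal_mono (measure_ne_top _ _) (measure_mono hFE)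
  have p2 : 0 ≤ (s.toJordanDecomposition.negPart F).toReal := ENNReal.toReal_nonneg
  linarith

lemma neg_apply_le_neg (s : SignedMeasure T) {E F : Set T} (hF : MeasurableSet F) (hFE : F ⊆ E) :
    -s F ≤ (s.toJordanDecomposition.negPart E).toReal := by
  rw [sm_eq_toReal s hF]
  have h1 : (s.toJordanDecomposition.negPart F).toReal
      ≤ (s.toJordanDecomposition.negPart E).toReal :=
    ENNReal.toReal_mono (measure_ne_top _ _) (measure_mono hFE)
  have p2 : 0 ≤ (s.toJordanDecomposition.posPart F).toReal := ENNReal.toReal_nonneg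
  linarith

lemma apply_le_tv (s : SignedMeasure T) {E F : Set T} (hF : MeasurableSet F) (hFE : F ⊆ E) :
    |s F| ≤ (s.totalVariation E).toReal := by
  rw [tv_apply, ENNReal.toReal_add (measure_ne_top _ _) (measure_ne_top _ _), abs_le]
  have h1 := apply_le_pos s hF hFE
  have h2 := neg_apply_le_neg s hF hFE
  have p1 : (0:ℝ) ≤ (s.toJordanDecomposition.negPart E).toReal := ENNReal.toReal_nonneg
  have p2 : (0:ℝ) ≤ (s.toJordanDecomposition.posPart E).toReal := ENNReal.toReal_nonneg
  constructor <;> linarith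

lemma tv_toReal_eq (s : SignedMeasure T) {E : Set T} (hE : MeasurableSet E) :
    ∃ F₁ F₂ : Set T, MeasurableSet F₁ ∧ MeasurableSet F₂ ∧ F₁ ⊆ E ∧ F₂ ⊆ E ∧
      (s.totalVariation E).toReal = s F₁ - s F₂ := by
  obtain ⟨i, hi₁, hi₂, hi₃, hpos, hneg⟩ := s.toJordanDecomposition_spec
  refine ⟨i ∩ E, iᶜ ∩ E, hi₁.inter hE, hi₁.compl.inter hE,
    Set.inter_subset_right, Set.inter_subset_right, ?_⟩
  rw [tv_apply, ENNReal.toReal_add (measure_ne_top _ _) (measure_ne_top _ _), hpos, hneg,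
    SignedMeasure.toMeasureOfZeroLE_apply _ hi₂ hi₁ hE,
    SignedMeasure.toMeasureOfLEZero_apply _ hi₃ hi₁.compl hE]
  simp only [ENNReal.coe_toReal, NNReal.coe_mk]
  ring

lemma tv_add_le (s t : SignedMeasure T) :
    (s + t).totalVariation ≤ s.totalVariation + t.totalVariation := by
  rw [Measure.le_iff]
  intro E hE
  rw [Measure.add_apply]
  rw [← ENNReal.toReal_le_toReal (tv_ne_top _ _)
    (ENNReal.add_ne_top.2 ⟨tv_ne_top _ _, tv_ne_top _ _⟩)]
  rw [ENNReal.toReal_add (tv_ne_top _ _) (tv_ne_top _ _)]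
  obtain ⟨F₁, F₂, hF₁, hF₂, hF₁E, hF₂E, hEq⟩ := tv_toReal_eq (s + t) hE
  rw [hEq]
  have h1 := apply_le_pos s hF₁ hF₁E
  have h2 := neg_apply_le_neg s hF₂ hF₂E
  have h3 := apply_le_pos t hF₁ hF₁E
  have h4 := neg_apply_le_neg t hF₂ hF₂E
  simp only [VectorMeasure.add_apply]
  rw [tv_apply s E, tv_apply t E,
    ENNReal.toReal_add (measure_ne_top _ _) (measure_ne_top _ _),
    ENNReal.toReal_add (measure_ne_top _ _) (measure_ne_top _ _)]
  linarith

end Toolbox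

lemma scalarMeas_apply (μ : VectorMeasure T X) (x' : X →L[ℝ] ℝ) (A : Set T) :
    scalarMeas μ x' A = x' (μ A) := rfl

lemma scalarMeas_add (μ : VectorMeasure T X) (a b : X →L[ℝ] ℝ) :
    scalarMeas μ (a + b) = scalarMeas μ a + scalarMeas μ b := by
  refine VectorMeasure.ext fun E hE => ?_
  simp [scalarMeas_apply, VectorMeasure.add_apply]

lemma scalarVar_le (μ : VectorMeasure T X) (a b : X →L[ℝ] ℝ) :
    scalarVar μ a ≤ scalarVar μ b + scalarVar μ (a - b) := by
  have h : scalarMeas μ a = scalarMeas μ b + scalarMeas μ (a - b) := by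
    rw [← scalarMeas_add]
    congr 1
    abel
  unfold scalarVar
  rw [h]
  exact tv_add_le _ _

lemma abs_indicator_le (f : T → ℝ) (A : Set T) (t : T) : |A.indicator f t| ≤ |f t| := by
  by_cases ht : t ∈ A <;> simp [Set.indicator, ht, abs_nonneg]

lemma uniform_bound (μ : VectorMeasure T X) {f : T → ℝ} (hf : Measurable f)
    (hKL : KLIntegrable μ f) :
    ∃ C : ℝ, 0 ≤ C ∧ ∀ x' : X →L[ℝ] ℝ, ∫ t, |f t| ∂scalarVar μ x' ≤ C * ‖x'‖ := by
  classical
  choose xA hxA using hKL.2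
  set g : {A : Set T // MeasurableSet A} → (X →L[ℝ] ℝ) →L[ℝ] ℝ :=
    fun A => ContinuousLinearMap.apply ℝ ℝ (xA A.1 A.2) with hg
  have hvar : ∀ x' : X →L[ℝ] ℝ, scalarVar μ x'
      = (scalarMeas μ x').toJordanDecomposition.posPart
        + (scalarMeas μ x').toJordanDecomposition.negPart := fun _ => rfl
  have hintP : ∀ x' : X →L[ℝ] ℝ,
      Integrable f ((scalarMeas μ x').toJordanDecomposition.posPart) := by
    intro x'
    have := hKL.1 x'
    rw [hvar x', integrable_add_measure] at this
    exact this.1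
  have hintN : ∀ x' : X →L[ℝ] ℝ,
      Integrable f ((scalarMeas μ x').toJordanDecomposition.negPart) := by
    intro x'
    have := hKL.1 x'
    rw [hvar x', integrable_add_measure] at this
    exact this.2
  -- the pointwise bound for Banach–Steinhaus
  have hpt : ∀ x' : X →L[ℝ] ℝ, ∃ Cx, ∀ A, ‖g A x'‖ ≤ Cx := by
    intro x'
    refine ⟨∫ t, |f t| ∂scalarVar μ x', fun A => ?_⟩
    have hApp : g A x' = x' (xA A.1 A.2) := rfl
    rw [hApp, Real.norm_eq_abs, hxA A.1 A.2 x', signedIntegral]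
    have habs : ∀ (m : Measure T), Integrable f m →
        |∫ t, A.1.indicator f t ∂m| ≤ ∫ t, |f t| ∂m := by
      intro m hm
      calc |∫ t, A.1.indicator f t ∂m| ≤ ∫ t, |A.1.indicator f t| ∂m := by
            simpa [Real.norm_eq_abs] using
              norm_integral_le_integral_norm (μ := m) (f := fun t => A.1.indicator f t)
        _ ≤ ∫ t, |f t| ∂m :=
            integral_mono ((hm.indicator A.2).abs) hm.abs (abs_indicator_le f A.1)
    have h1 := habs _ (hintP x')
    have h2 := habs _ (hintN x')
    rw [hvar x', integral_add_measure (hintP x').abs (hintN x').abs]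
    have := abs_sub (∫ t, A.1.indicator f t ∂(scalarMeas μ x').toJordanDecomposition.posPart)
      (∫ t, A.1.indicator f t ∂(scalarMeas μ x').toJordanDecomposition.negPart)
    calc _ ≤ |∫ t, A.1.indicator f t ∂(scalarMeas μ x').toJordanDecomposition.posPart|
        + |∫ t, A.1.indicator f t ∂(scalarMeas μ x').toJordanDecomposition.negPart| :=
          abs_sub _ _
      _ ≤ _ := add_le_add h1 h2
  obtain ⟨C', hC'⟩ := banach_steinhaus hpt
  have hkey : ∀ (A : Set T) (hA : MeasurableSet A) (x' : X →L[ℝ] ℝ),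
      |signedIntegral (scalarMeas μ x') (A.indicator f)| ≤ max C' 0 * ‖x'‖ := by
    intro A hA x'
    have : |signedIntegral (scalarMeas μ x') (A.indicator f)| = ‖g ⟨A, hA⟩ x'‖ := by
      rw [show g ⟨A, hA⟩ x' = x' (xA A hA) from rfl, hxA A hA x', Real.norm_eq_abs]
    rw [this]
    calc ‖g ⟨A, hA⟩ x'‖ ≤ ‖g ⟨A, hA⟩‖ * ‖x'‖ := (g ⟨A, hA⟩).le_opNorm x'
      _ ≤ max C' 0 * ‖x'‖ := by
          apply mul_le_mul_of_nonneg_right _ (norm_nonneg _)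
          exact le_trans (hC' ⟨A, hA⟩) (le_max_left _ _)
  refine ⟨4 * max C' 0, by positivity, fun x' => ?_⟩
  obtain ⟨i, hi₁, hi₂, hi₃, hpos, hneg⟩ := (scalarMeas μ x').toJordanDecomposition_spec
  set P := (scalarMeas μ x').toJordanDecomposition.posPart with hP
  set N := (scalarMeas μ x').toJordanDecomposition.negPart with hN
  have hPic : P iᶜ = 0 := by
    rw [hpos, SignedMeasure.toMeasureOfZeroLE_apply _ hi₂ hi₁ hi₁.compl]
    simp [Set.inter_compl_self, VectorMeasure.empty]
  have hNi : N i = 0 := by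
    rw [hneg, SignedMeasure.toMeasureOfLEZero_apply _ hi₃ hi₁.compl hi₁]
    simp [Set.compl_inter_self, VectorMeasure.empty]
  have hsubP : ∀ R : Set T, MeasurableSet R →
      ∫ t in R, f t ∂P = signedIntegral (scalarMeas μ x') ((i ∩ R).indicator f) := by
    intro R hR
    rw [signedIntegral, integral_indicator (hi₁.inter hR), integral_indicator (hi₁.inter hR)]
    have hN0 : N (i ∩ R) = 0 := measure_mono_null Set.inter_subset_left hNi
    rw [setIntegral_measure_zero _ hN0, sub_zero]
    refine (setIntegral_congr_set ?_).symm
    rw [ae_eq_set]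
    constructor
    · rw [Set.diff_eq_empty.mpr Set.inter_subset_right]; exact measure_empty
    · refine measure_mono_null (fun t ht => ?_) hPic
      rcases ht with ⟨htR, hti⟩
      exact fun hti' => hti ⟨hti', htR⟩
  have hsubN : ∀ R : Set T, MeasurableSet R →
      ∫ t in R, f t ∂N = - signedIntegral (scalarMeas μ x') ((iᶜ ∩ R).indicator f) := by
    intro R hR
    rw [signedIntegral, integral_indicator (hi₁.compl.inter hR),
      integral_indicator (hi₁.compl.inter hR), ← hP, ← hN]
    have hP0 : P (iᶜ ∩ R) = 0 := measure_mono_null Set.inter_subset_left hPic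
    rw [setIntegral_measure_zero _ hP0, zero_sub, neg_neg]
    refine setIntegral_congr_set ?_
    rw [ae_eq_set]
    constructor
    · refine measure_mono_null (fun t ht => ?_) hNi
      rcases ht with ⟨htR, hti⟩
      by_contra hti'
      exact hti ⟨hti', htR⟩
    · rw [Set.diff_eq_empty.mpr Set.inter_subset_right]; exact measure_empty
  have hQ : MeasurableSet {t : T | 0 ≤ f t} := measurableSet_le measurable_const hf
  have hsplit : ∀ (m : Measure T), Integrable f m → ∫ t, |f t| ∂m =
      (∫ t in {t : T | 0 ≤ f t}, f t ∂m) - (∫ t in {t : T | 0 ≤ f t}ᶜ, f t ∂m) := by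
    intro m hm
    rw [← integral_add_compl hQ hm.abs]
    have e1 : ∫ t in {t : T | 0 ≤ f t}, |f t| ∂m = ∫ t in {t : T | 0 ≤ f t}, f t ∂m :=
      setIntegral_congr_fun hQ (fun t ht => abs_of_nonneg ht)
    have e2 : ∫ t in {t : T | 0 ≤ f t}ᶜ, |f t| ∂m
        = ∫ t in {t : T | 0 ≤ f t}ᶜ, (fun u => -f u) t ∂m :=
      setIntegral_congr_fun hQ.compl (fun t ht => abs_of_neg (not_le.mp ht))
    rw [e1, e2, integral_neg]
    ring
  have eP := hsplit P (hintP x')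
  have eN := hsplit N (hintN x')
  have c1 : |∫ t in {t : T | 0 ≤ f t}, f t ∂P| ≤ max C' 0 * ‖x'‖ := by
    rw [hsubP _ hQ]; exact hkey _ (hi₁.inter hQ) x'
  have c2 : |∫ t in {t : T | 0 ≤ f t}ᶜ, f t ∂P| ≤ max C' 0 * ‖x'‖ := by
    rw [hsubP _ hQ.compl]; exact hkey _ (hi₁.inter hQ.compl) x'
  have c3 : |∫ t in {t : T | 0 ≤ f t}, f t ∂N| ≤ max C' 0 * ‖x'‖ := by
    rw [hsubN _ hQ, abs_neg]; exact hkey _ (hi₁.compl.inter hQ) x'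
  have c4 : |∫ t in {t : T | 0 ≤ f t}ᶜ, f t ∂N| ≤ max C' 0 * ‖x'‖ := by
    rw [hsubN _ hQ.compl, abs_neg]; exact hkey _ (hi₁.compl.inter hQ.compl) x'
  have etot : ∫ t, |f t| ∂scalarVar μ x' = (∫ t, |f t| ∂P) + ∫ t, |f t| ∂N := by
    rw [hvar x', integral_add_measure (hintP x').abs (hintN x').abs]
  rw [etot, eP, eN]
  rw [abs_le] at c1 c2 c3 c4
  linarith [c1.1, c1.2, c2.1, c2.2, c3.1, c3.2, c4.1, c4.2]

lemma scalarVar_sub_comm (μ : VectorMeasure T X) (a b : X →L[ℝ] ℝ) :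
    scalarVar μ (a - b) = scalarVar μ (b - a) := by
  have h : scalarMeas μ (a - b) = -(scalarMeas μ (b - a)) := by
    refine VectorMeasure.ext fun E hE => ?_
    simp only [scalarMeas_apply, VectorMeasure.neg_apply, ContinuousLinearMap.sub_apply]
    ring
  unfold scalarVar
  rw [h, SignedMeasure.totalVariation_neg]

lemma ksIntegral_diff (μ : VectorMeasure T X) (B : ℕ → Set T) {f : T → ℝ} {C : ℝ}
    (hInt : ∀ x' : X →L[ℝ] ℝ, Integrable f (scalarVar μ x'))
    (hC : ∀ x' : X →L[ℝ] ℝ, ∫ t, |f t| ∂scalarVar μ x' ≤ C * ‖x'‖)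
    (hBk : ∀ k, MeasurableSet (B k)) (k : ℕ) (a b : X →L[ℝ] ℝ) :
    |ksIntegral μ B f a k - ksIntegral μ B f b k| ≤ 2 * (C * ‖a - b‖) := by
  set g : T → ℝ := (B k).indicator f with hgdef
  set Δ : Measure T := scalarVar μ (a - b) with hΔ
  have hΔ' : scalarVar μ (b - a) = Δ := (scalarVar_sub_comm μ a b).symm
  have hmab : scalarVar μ a ≤ scalarVar μ b + Δ := scalarVar_le μ a b
  have hmba : scalarVar μ b ≤ scalarVar μ a + Δ := by
    rw [← hΔ']; exact scalarVar_le μ b a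
  have hint : ∀ x' : X →L[ℝ] ℝ, Integrable g (scalarVar μ x') :=
    fun x' => (hInt x').indicator (hBk k)
  have hgabs : ∀ t, |g t| ≤ |f t| := abs_indicator_le f (B k)
  -- bound for nonneg φ ≤ |f|
  have key : ∀ φ : T → ℝ, (∀ t, 0 ≤ φ t) → (∀ t, φ t ≤ |f t|) →
      (∀ x' : X →L[ℝ] ℝ, Integrable φ (scalarVar μ x')) →
      ∀ u v : X →L[ℝ] ℝ, scalarVar μ u ≤ scalarVar μ v + Δ →
      (∫ t, φ t ∂scalarVar μ u) - (∫ t, φ t ∂scalarVar μ v) ≤ C * ‖a - b‖ := by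
    intro φ hφ0 hφf hφint u v hle
    have hsum : Integrable φ (scalarVar μ v + Δ) :=
      integrable_add_measure.mpr ⟨hφint v, hφint (a - b)⟩
    have h1 : (∫ t, φ t ∂scalarVar μ u) ≤ ∫ t, φ t ∂(scalarVar μ v + Δ) :=
      integral_mono_measure hle (Filter.Eventually.of_forall hφ0) hsum
    rw [integral_add_measure (hφint v) (hφint (a - b))] at h1
    have h2 : (∫ t, φ t ∂Δ) ≤ ∫ t, |f t| ∂Δ :=
      integral_mono (hφint (a - b)) (hInt (a - b)).abs hφf
    have h3 := hC (a - b)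
    linarith
  set gp : T → ℝ := fun t => max (g t) 0 with hgp
  set gn : T → ℝ := fun t => max (-g t) 0 with hgn
  have hgp0 : ∀ t, 0 ≤ gp t := fun t => le_max_right _ _
  have hgn0 : ∀ t, 0 ≤ gn t := fun t => le_max_right _ _
  have hgpf : ∀ t, gp t ≤ |f t| :=
    fun t => max_le (le_trans (le_abs_self _) (hgabs t)) (abs_nonneg _)
  have hgnf : ∀ t, gn t ≤ |f t| :=
    fun t => max_le (le_trans (neg_le_abs _) (hgabs t)) (abs_nonneg _)
  have hgpint : ∀ x' : X →L[ℝ] ℝ, Integrable gp (scalarVar μ x') := fun x' => (hint x').pos_part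
  have hgnint : ∀ x' : X →L[ℝ] ℝ, Integrable gn (scalarVar μ x') := fun x' => (hint x').neg_part
  have hdecomp : ∀ x' : X →L[ℝ] ℝ,
      ksIntegral μ B f x' k = (∫ t, gp t ∂scalarVar μ x') - ∫ t, gn t ∂scalarVar μ x' := by
    intro x'
    rw [← integral_sub (hgpint x') (hgnint x')]
    refine integral_congr_ae (Filter.Eventually.of_forall fun t => ?_)
    simp only [hgp, hgn]
    exact (max_zero_sub_max_neg_zero_eq_self (g t)).symm
  have p1 := key gp hgp0 hgpf hgpint a b hmab
  have p2 := key gp hgp0 hgpf hgpint b a hmba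
  have n1 := key gn hgn0 hgnf hgnint a b hmab
  have n2 := key gn hgn0 hgnf hgnint b a hmba
  rw [hdecomp a, hdecomp b, abs_le]
  constructor <;> linarith

lemma var_null_of_ksIntegral_zero (μ : VectorMeasure T X) (B : ℕ → Set T) (hB : MuDense μ B)
    {f : T → ℝ} (hf : Measurable f) {x' : X →L[ℝ] ℝ} (hx' : ‖x'‖ ≤ 1)
    (hInt : Integrable f (scalarVar μ x'))
    (h0 : ∀ k, ksIntegral μ B f x' k = 0) :
    scalarVar μ x' {t | f t ≠ 0} = 0 := by
  set m := scalarVar μ x' with hm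
  have hAint : ∀ A : Set T, MeasurableSet A → ∫ t in A, f t ∂m = 0 := by
    intro A hA
    have hchoice : ∀ n : ℕ, ∃ k,
        semivar μ (symmDiff A (B k)) ≤ ENNReal.ofReal (1/(n+1)) :=
      fun n => hB.2 A hA (1/(n+1)) (by positivity)
    choose ks hks using hchoice
    set s : ℕ → Set T := fun n => symmDiff A (B (ks n)) with hs
    have hmess : ∀ n, m (s n) ≤ ENNReal.ofReal (1/(n+1)) := by
      intro n
      refine le_trans ?_ (hks n)
      exact le_iSup
        (fun y : {y : X →L[ℝ] ℝ // ‖y‖ ≤ 1} => scalarVar μ y.1 (symmDiff A (B (ks n))))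
        ⟨x', hx'⟩
    have htend : Filter.Tendsto (fun n => m (s n)) Filter.atTop (nhds 0) := by
      refine tendsto_of_tendsto_of_tendsto_of_le_of_le tendsto_const_nhds ?_
        (fun n => zero_le) hmess
      have h2 : Filter.Tendsto (fun n : ℕ => ENNReal.ofReal (1/(n+1))) Filter.atTop
          (nhds (ENNReal.ofReal 0)) :=
        ENNReal.tendsto_ofReal tendsto_one_div_add_atTop_nhds_zero_nat
      simpa using h2
    have hsetint := hInt.abs.tendsto_setIntegral_nhds_zero htend
    have hb : ∀ n, |∫ t in A, f t ∂m| ≤ ∫ t in s n, |f t| ∂m := by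
      intro n
      have hksm : MeasurableSet (B (ks n)) := hB.1 _
      have hsn : MeasurableSet (s n) := hA.symmDiff hksm
      have hpt : ∀ t, |A.indicator f t - (B (ks n)).indicator f t|
          ≤ (s n).indicator (fun u => |f u|) t := by
        intro t
        by_cases htA : t ∈ A <;> by_cases htB : t ∈ B (ks n) <;>
          simp [Set.indicator, htA, htB, hs, Set.mem_symmDiff, abs_nonneg]
      have e0 : ∫ t in A, f t ∂m = (∫ t in A, f t ∂m) - ksIntegral μ B f x' (ks n) := by
        rw [h0]; ring
      rw [e0, ksIntegral, ← integral_indicator hA,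
        ← integral_sub (hInt.indicator hA) (hInt.indicator hksm)]
      calc |∫ t, (A.indicator f t - (B (ks n)).indicator f t) ∂m|
          ≤ ∫ t, |A.indicator f t - (B (ks n)).indicator f t| ∂m := by
            simpa [Real.norm_eq_abs] using norm_integral_le_integral_norm (μ := m)
              (f := fun t => A.indicator f t - (B (ks n)).indicator f t)
        _ ≤ ∫ t, (s n).indicator (fun u => |f u|) t ∂m :=
            integral_mono ((hInt.indicator hA).sub (hInt.indicator hksm)).abs
              (hInt.abs.indicator hsn) hpt
        _ = ∫ t in s n, |f t| ∂m := integral_indicator hsn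
    have hle0 : |∫ t in A, f t ∂m| ≤ 0 := ge_of_tendsto' hsetint hb
    have := abs_nonneg (∫ t in A, f t ∂m)
    have : |∫ t in A, f t ∂m| = 0 := le_antisymm hle0 this
    exact abs_eq_zero.mp this
  have hae : f =ᵐ[m] 0 :=
    hInt.ae_eq_zero_of_forall_setIntegral_eq_zero (fun A hA _ => hAint A hA)
  have h := hae
  rw [Filter.EventuallyEq, ae_iff] at h
  simpa using h


/-- `⟨·,·⟩` is an inner product on `L¹[μ]` (symmetric, bilinear, nonnegative,
and definite modulo `μ`-null functions), and `‖f‖_{KS²[wτμ]} = ⟨f,f⟩^{1/2}`. -/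
theorem stmt_16 (μ : VectorMeasure T X) (B : ℕ → Set T) (hB : MuDense μ B)
    (η ω : ℕ → ℝ) (hη : ∀ k, 0 < η k) (hηsum : ∑' k, η k = 1)
    (hω : ∀ h, 0 < ω h) (hωsum : ∑' h, ω h = 1)
    (x'h : ℕ → X →L[ℝ] ℝ) (hx'h : ∀ h, ‖x'h h‖ ≤ 1)
    (hdense : ∀ y : X →L[ℝ] ℝ, ‖y‖ ≤ 1 → ∀ ε : ℝ, 0 < ε → ∃ h, ‖x'h h - y‖ ≤ ε) :
    -- symmetry
    (∀ f g : T → ℝ, ksBilin μ B η ω x'h f g = ksBilin μ B η ω x'h g f) ∧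
    -- nonnegativity on the diagonal
    (∀ f : T → ℝ, 0 ≤ ksBilin μ B η ω x'h f f) ∧
    -- homogeneity in the first variable
    (∀ (c : ℝ) (f g : T → ℝ),
      ksBilin μ B η ω x'h (fun t => c * f t) g = c * ksBilin μ B η ω x'h f g) ∧
    -- additivity in the first variable (for summable integrable entries)
    (∀ f g w : T → ℝ, KLIntegrable μ f → KLIntegrable μ g →
      (Summable fun h => ω h *
        ∑' k, η k * (ksIntegral μ B f (x'h h) k * ksIntegral μ B w (x'h h) k)) →
      (Summable fun h => ω h *
        ∑' k, η k * (ksIntegral μ B g (x'h h) k * ksIntegral μ B w (x'h h) k)) →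
      (∀ h, Summable fun k =>
        η k * (ksIntegral μ B f (x'h h) k * ksIntegral μ B w (x'h h) k)) →
      (∀ h, Summable fun k =>
        η k * (ksIntegral μ B g (x'h h) k * ksIntegral μ B w (x'h h) k)) →
      ksBilin μ B η ω x'h (fun t => f t + g t) w
        = ksBilin μ B η ω x'h f w + ksBilin μ B η ω x'h g w) ∧
    -- definiteness modulo μ-null functions
    (∀ f : T → ℝ, Measurable f → KLIntegrable μ f → ksBilin μ B η ω x'h f f = 0 →
      ∀ A : Set T, MeasurableSet A → A ⊆ {t | f t ≠ 0} → μ A = 0) ∧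
    -- the weak KS² norm is induced by the inner product
    (∀ f : T → ℝ,
      (∑' h, ω h * ∑' k, η k * |ksIntegral μ B f (x'h h) k| ^ (2 : ℝ)) ^ ((1 : ℝ) / 2)
        = Real.sqrt (ksBilin μ B η ω x'h f f)) := by
  refine ⟨?_, ?_, ?_, ?_, ?_, ?_⟩
  · -- symmetry
    intro f g
    unfold ksBilin
    refine tsum_congr fun h => ?_
    congr 1
    exact tsum_congr fun k => by rw [mul_comm (ksIntegral μ B f (x'h h) k)]
  · -- nonnegativity
    intro f
    refine tsum_nonneg fun h => mul_nonneg (hω h).le (tsum_nonneg fun k => ?_)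
    exact mul_nonneg (hη k).le (mul_self_nonneg _)
  · -- homogeneity
    intro c f g
    have hI : ∀ (x' : X →L[ℝ] ℝ) (k : ℕ),
        ksIntegral μ B (fun t => c * f t) x' k = c * ksIntegral μ B f x' k := by
      intro x' k
      unfold ksIntegral
      have hpt : ∀ t, (B k).indicator (fun t => c * f t) t = c * (B k).indicator f t := by
        intro t
        by_cases ht : t ∈ B k <;> simp [Set.indicator, ht]
      simp_rw [hpt]
      exact integral_const_mul c _
    unfold ksBilin
    simp_rw [hI]
    rw [← tsum_mul_left]
    refine tsum_congr fun h => ?_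
    have e1 : ∑' k, η k * (c * ksIntegral μ B f (x'h h) k * ksIntegral μ B g (x'h h) k)
        = c * ∑' k, η k * (ksIntegral μ B f (x'h h) k * ksIntegral μ B g (x'h h) k) := by
      rw [← tsum_mul_left]
      exact tsum_congr fun k => by ring
    rw [e1]
    ring
  · -- additivity
    intro f g w hKLf hKLg hsum1 hsum2 hsum3 hsum4
    have hIadd : ∀ (x' : X →L[ℝ] ℝ) (k : ℕ),
        ksIntegral μ B (fun t => f t + g t) x' k
          = ksIntegral μ B f x' k + ksIntegral μ B g x' k := by
      intro x' k
      unfold ksIntegral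
      have hpt : ∀ t, (B k).indicator (fun t => f t + g t) t
          = (B k).indicator f t + (B k).indicator g t := by
        intro t
        by_cases ht : t ∈ B k <;> simp [Set.indicator, ht]
      simp_rw [hpt]
      exact integral_add ((hKLf.1 x').indicator (hB.1 k)) ((hKLg.1 x').indicator (hB.1 k))
    unfold ksBilin
    have inner : ∀ h, (∑' k, η k * (ksIntegral μ B (fun t => f t + g t) (x'h h) k
          * ksIntegral μ B w (x'h h) k))
        = (∑' k, η k * (ksIntegral μ B f (x'h h) k * ksIntegral μ B w (x'h h) k))
          + ∑' k, η k * (ksIntegral μ B g (x'h h) k * ksIntegral μ B w (x'h h) k) := by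
      intro h
      rw [← Summable.tsum_add (hsum3 h) (hsum4 h)]
      exact tsum_congr fun k => by rw [hIadd]; ring
    have outer : ∀ h, ω h * (∑' k, η k * (ksIntegral μ B (fun t => f t + g t) (x'h h) k
          * ksIntegral μ B w (x'h h) k))
        = ω h * (∑' k, η k * (ksIntegral μ B f (x'h h) k * ksIntegral μ B w (x'h h) k))
          + ω h * ∑' k, η k * (ksIntegral μ B g (x'h h) k * ksIntegral μ B w (x'h h) k) := by
      intro h
      rw [inner h, mul_add]
    rw [tsum_congr outer]
    exact Summable.tsum_add hsum1 hsum2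
  · -- definiteness
    intro f hfmeas hKL hzero A hA hAsub
    by_contra hne
    obtain ⟨xg, hxg1, hxgA⟩ := exists_dual_vector ℝ (μ A) (norm_ne_zero_iff.mpr hne)
    have hηS : Summable η := by
      by_contra hs
      rw [tsum_eq_zero_of_not_summable hs] at hηsum
      norm_num at hηsum
    have hωS : Summable ω := by
      by_contra hs
      rw [tsum_eq_zero_of_not_summable hs] at hωsum
      norm_num at hωsum
    obtain ⟨C, hC0, hC⟩ := uniform_bound μ hfmeas hKL
    have hIb : ∀ (x' : X →L[ℝ] ℝ), ‖x'‖ ≤ 1 → ∀ k, |ksIntegral μ B f x' k| ≤ C := by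
      intro x' hx' k
      unfold ksIntegral
      calc |∫ t, (B k).indicator f t ∂scalarVar μ x'|
          ≤ ∫ t, |(B k).indicator f t| ∂scalarVar μ x' := by
            simpa [Real.norm_eq_abs] using norm_integral_le_integral_norm
              (μ := scalarVar μ x') (f := fun t => (B k).indicator f t)
        _ ≤ ∫ t, |f t| ∂scalarVar μ x' :=
            integral_mono ((hKL.1 x').indicator (hB.1 k)).abs (hKL.1 x').abs
              (abs_indicator_le f (B k))
        _ ≤ C * ‖x'‖ := hC x'
        _ ≤ C := by nlinarith [norm_nonneg x']
    set I : ℕ → ℕ → ℝ := fun h k => ksIntegral μ B f (x'h h) k with hIdef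
    have hterm_nonneg : ∀ h k, 0 ≤ η k * (I h k * I h k) :=
      fun h k => mul_nonneg (hη k).le (mul_self_nonneg _)
    have htermb : ∀ h k, η k * (I h k * I h k) ≤ η k * (C * C) := by
      intro h k
      refine mul_le_mul_of_nonneg_left ?_ (hη k).le
      have habs := hIb (x'h h) (hx'h h) k
      calc I h k * I h k = |I h k| * |I h k| := (abs_mul_abs_self _).symm
        _ ≤ C * C := mul_le_mul habs habs (abs_nonneg _) hC0
    have hinnerS : ∀ h, Summable fun k => η k * (I h k * I h k) := by
      intro h
      exact Summable.of_nonneg_of_le (hterm_nonneg h) (htermb h) (hηS.mul_right (C*C))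
    set S : ℕ → ℝ := fun h => ∑' k, η k * (I h k * I h k) with hSdef
    have hS0 : ∀ h, 0 ≤ S h := fun h => tsum_nonneg (hterm_nonneg h)
    have hSb : ∀ h, S h ≤ C * C := by
      intro h
      calc S h ≤ ∑' k, η k * (C * C) :=
            Summable.tsum_le_tsum (htermb h) (hinnerS h) (hηS.mul_right _)
        _ = (∑' k, η k) * (C * C) := tsum_mul_right
        _ = C * C := by rw [hηsum, one_mul]
    have houterS : Summable fun h => ω h * S h :=
      Summable.of_nonneg_of_le (fun h => mul_nonneg (hω h).le (hS0 h))
        (fun h => mul_le_mul_of_nonneg_left (hSb h) (hω h).le) (hωS.mul_right (C*C))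
    have hzero' : ∑' h, ω h * S h = 0 := hzero
    have hSzero : ∀ h, S h = 0 := by
      intro h
      have h1 : ω h * S h ≤ 0 :=
        hzero' ▸ Summable.le_tsum houterS h (fun j _ => mul_nonneg (hω j).le (hS0 j))
      have h2 := le_antisymm h1 (mul_nonneg (hω h).le (hS0 h))
      rcases mul_eq_zero.mp h2 with h' | h'
      · exact absurd h' (hω h).ne'
      · exact h'
    have hIzero : ∀ h k, I h k = 0 := by
      intro h k
      have h1 : η k * (I h k * I h k) ≤ 0 :=
        (hSzero h) ▸ Summable.le_tsum (hinnerS h) k (fun j _ => hterm_nonneg h j)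
      have h2 := le_antisymm h1 (hterm_nonneg h k)
      rcases mul_eq_zero.mp h2 with h' | h'
      · exact absurd h' (hη k).ne'
      · exact mul_self_eq_zero.mp h'
    have hxg1' : ‖xg‖ ≤ 1 := le_of_eq hxg1
    have hgzero : ∀ k, ksIntegral μ B f xg k = 0 := by
      intro k
      have hδb : ∀ δ : ℝ, 0 < δ → |ksIntegral μ B f xg k| ≤ δ := by
        intro δ hδ
        have hCpos : (0:ℝ) < 2*C+1 := by linarith
        obtain ⟨h, hh⟩ := hdense xg hxg1' (δ/(2*C+1)) (by positivity)
        have hd := ksIntegral_diff μ B hKL.1 hC hB.1 k xg (x'h h)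
        rw [show ksIntegral μ B f (x'h h) k = 0 from hIzero h k, sub_zero] at hd
        have hnorm : ‖xg - x'h h‖ ≤ δ/(2*C+1) := by rw [norm_sub_rev]; exact hh
        have hmul : C * ‖xg - x'h h‖ ≤ C * (δ/(2*C+1)) :=
          mul_le_mul_of_nonneg_left hnorm hC0
        have hfin : 2*(C*(δ/(2*C+1))) ≤ δ := by
          rw [show 2*(C*(δ/(2*C+1))) = (2*C*δ)/(2*C+1) by ring]
          rw [div_le_iff₀ hCpos]
          linarith [mul_nonneg hC0 hδ.le]
        linarith
      by_contra hne0
      have habs : 0 < |ksIntegral μ B f xg k| := abs_pos.mpr hne0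
      have := hδb (|ksIntegral μ B f xg k|/2) (by positivity)
      linarith
    have hvar0 : scalarVar μ xg {t | f t ≠ 0} = 0 :=
      var_null_of_ksIntegral_zero μ B hB hfmeas hxg1' (hKL.1 xg) hgzero
    have hvarA : scalarVar μ xg A = 0 := measure_mono_null hAsub hvar0
    have hsA : scalarMeas μ xg A = 0 :=
      SignedMeasure.null_of_totalVariation_zero (scalarMeas μ xg) hvarA
    rw [scalarMeas_apply, hxgA] at hsA
    exact hne (norm_eq_zero.mp hsA)
  · -- norm identity
    intro f
    rw [Real.sqrt_eq_rpow]
    congr 1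
    unfold ksBilin
    refine tsum_congr fun h => ?_
    congr 1
    refine tsum_congr fun k => ?_
    rw [Real.rpow_two, sq_abs, sq]
end
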